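/- (Minimality count.) Let A be a real central hyperplane arrangement with ordering satisfying the cut property w.r.t. a chamber B. Then the number of chambers C with |η(C)| = k equals the number of nbc sets of A of cardinality k; consequently the Salvetti complex of A admits an acyclic matching whose number of critical cells in dimension k equals the rank of the k-th cohomology group of the complement of the complexified arrangement (i.e., the k-th Betti number, given by the number of nbc sets of size k). -/

import Mathlib

open scoped Classical

/-- The sign of a real number, as an element of `SignType`. -/
noncomputable def sgn (r : ℝ) : SignType := if 0 < r then 1 else if r < 0 then -1 else 0

/-- An arrangement of linear hyperplanes in a real vector space `V`, with linearly
ordered ground set a finite set `E` of natural numbers: hyperplane `H_i = ker (f i)`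
for `i ∈ E`. -/
structure NArr (V : Type) [AddCommGroup V] [Module ℝ V] where
  E : Finset ℕ
  f : ℕ → V →ₗ[ℝ] ℝ
  nz : ∀ i ∈ E, f i ≠ 0

variable {V : Type} [AddCommGroup V] [Module ℝ V]

/-- A chamber of `A`, encoded by its sign vector (supported on the ground set). -/
def NArr.IsChamber (A : NArr V) (C : ℕ → SignType) : Prop :=
  (∀ i ∈ A.E, C i ≠ 0) ∧ (∀ i ∉ A.E, C i = 0) ∧ ∃ x, ∀ i ∈ A.E, sgn (A.f i x) = C i

/-- The largest (= last) hyperplane of `A`. -/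
noncomputable def NArr.last (A : NArr V) : ℕ := A.E.sup id

/-- The deletion `A' = A ∖ {H_n}` of the last hyperplane. -/
noncomputable def NArr.delete (A : NArr V) : NArr V :=
  ⟨A.E.erase A.last, A.f, fun i hi => A.nz i (Finset.mem_of_mem_erase hi)⟩

/-- The ground set of the restriction `A'' = {H ∩ H_n | H ∈ A'}`: each flat `H ∩ H_n`
is labeled by the smallest hyperplane of `A` containing it. -/
noncomputable def NArr.resE (A : NArr V) : Finset ℕ :=
  (A.E.erase A.last).filter fun i =>
    (A.f i).domRestrict (LinearMap.ker (A.f A.last)) ≠ 0 ∧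
    ∀ j ∈ A.E.erase A.last,
      LinearMap.ker (A.f j) ⊓ LinearMap.ker (A.f A.last) =
        LinearMap.ker (A.f i) ⊓ LinearMap.ker (A.f A.last) → i ≤ j

/-- The restriction `A''` of `A` to its last hyperplane, with the induced ordering. -/
noncomputable def NArr.restrict (A : NArr V) : NArr ↥(LinearMap.ker (A.f A.last)) :=
  ⟨A.resE, fun i => (A.f i).domRestrict (LinearMap.ker (A.f A.last)),
   fun i hi => (Finset.mem_filter.mp hi).2.1⟩

/-- Restriction of a sign vector to a subset of the ground set. -/
def restrictSigns (S : Finset ℕ) (C : ℕ → SignType) : ℕ → SignType :=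
  fun i => if i ∈ S then C i else 0

/-- `C ∈ B↑`: the chamber `C` lies on the non-`B` side of the last hyperplane `H_n` and
the chamber of the deletion `A'` containing it is cut by `H_n`. -/
def NArr.upperCond (A : NArr V) (B C : ℕ → SignType) : Prop :=
  C A.last ≠ B A.last ∧
    ∃ x, A.f A.last x = 0 ∧ ∀ i ∈ A.E.erase A.last, sgn (A.f i x) = C i

/-- The Jewell–Orlik recursion: `IsJO V A B η` holds iff `η` is obtained by the recursive
deletion–restriction definition of the map of Jewell and Orlik for the arrangement `A`
with base chamber `B`:  `η(C) = η'(C')` if `C ∈ U ∪ B↓`, and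
`η(C) = {H_n} ∪ η''(C ∩ H_n)` (labels taken in `A`) if `C ∈ B↑`. -/
inductive IsJO :
    ∀ (V : Type) [AddCommGroup V] [Module ℝ V],
      NArr V → (ℕ → SignType) → ((ℕ → SignType) → Finset ℕ) → Prop
  | base {V : Type} [AddCommGroup V] [Module ℝ V] (A : NArr V) (B : ℕ → SignType)
      (η : (ℕ → SignType) → Finset ℕ) :
      A.E = ∅ → (∀ C, η C = ∅) → IsJO V A B η
  | step {V : Type} [AddCommGroup V] [Module ℝ V] (A : NArr V) (B : ℕ → SignType)
      (η η' : (ℕ → SignType) → Finset ℕ) (η'' : (ℕ → SignType) → Finset ℕ) :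
      A.E.Nonempty →
      IsJO V A.delete (restrictSigns (A.E.erase A.last) B) η' →
      IsJO ↥(LinearMap.ker (A.f A.last)) A.restrict (restrictSigns A.resE B) η'' →
      (∀ C, A.IsChamber C → ¬ A.upperCond B C →
        η C = η' (restrictSigns (A.E.erase A.last) C)) →
      (∀ C, A.IsChamber C → A.upperCond B C →
        η C = insert A.last (η'' (restrictSigns A.resE C))) →
      IsJO V A B η

/-- Independent sets of the underlying matroid. -/
def NArr.Indep (A : NArr V) (S : Finset ℕ) : Prop :=
  S ⊆ A.E ∧ LinearIndependent ℝ (fun i : S => A.f i.1)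

/-- Circuits: minimal dependent subsets. -/
def NArr.IsCircuit (A : NArr V) (S : Finset ℕ) : Prop :=
  S ⊆ A.E ∧ ¬ A.Indep S ∧ ∀ T ⊂ S, A.Indep T

/-- Broken circuits: circuits with their smallest element removed. -/
def NArr.IsBroken (A : NArr V) (S : Finset ℕ) : Prop :=
  ∃ T, A.IsCircuit T ∧ ∃ h : T.Nonempty, S = T.erase (T.min' h)

/-- The no-broken-circuit sets of `A`. -/
def NArr.nbc (A : NArr V) : Set (Finset ℕ) :=
  {S | A.Indep S ∧ ∀ T, A.IsBroken T → ¬ T ⊆ S}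

/-- The real value of a sign. -/
def signVal : SignType → ℝ
  | SignType.zero => 0
  | SignType.neg => -1
  | SignType.pos => 1

/-- The ordering of the hyperplanes of `A` satisfies the cut property with respect to
`B` : every hyperplane which is not the first one meets the interior of the base
chamber of the preceding ones. -/
def NArr.CutProp (A : NArr V) (B : ℕ → SignType) : Prop :=
  ∀ j ∈ A.E, (∃ i ∈ A.E, i < j) →
    ∃ x, A.f j x = 0 ∧ ∀ i ∈ A.E, i < j → 0 < signVal (B i) * A.f i x

/-- The flat spanned by a set of hyperplanes. -/
noncomputable def NArr.flatOf (A : NArr V) (S : Finset ℕ) : Submodule ℝ V :=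
  ⨅ i ∈ S, LinearMap.ker (A.f i)

lemma sgn_eq_sign (r : ℝ) : sgn r = SignType.sign r := by
  unfold sgn
  rcases lt_trichotomy r 0 with h|h|h
  · simp [h, not_lt.2 h.le, sign_apply]
  · simp [h, sign_apply]
  · simp [h, not_lt.2 h.le, sign_apply]

lemma sgn_of_pos {r : ℝ} (h : 0 < r) : sgn r = 1 := if_pos h
lemma sgn_of_neg {r : ℝ} (h : r < 0) : sgn r = -1 := by
  unfold sgn; rw [if_neg (not_lt.2 h.le), if_pos h]
lemma sgn_zero : sgn 0 = 0 := by unfold sgn; simp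

lemma sgn_eq_zero_iff {r : ℝ} : sgn r = 0 ↔ r = 0 := by
  rw [sgn_eq_sign]; exact sign_eq_zero_iff

lemma sgn_mul (a b : ℝ) : sgn (a * b) = sgn a * sgn b := by
  rw [sgn_eq_sign, sgn_eq_sign, sgn_eq_sign]; exact sign_mul a b

lemma sgn_add_of_abs_lt {a b : ℝ} (h : |b| < |a|) : sgn (a + b) = sgn a := by
  rcases lt_trichotomy a 0 with ha|ha|ha
  · rw [sgn_of_neg ha, sgn_of_neg]
    have := abs_lt.mp h
    rw [abs_of_neg ha] at this
    linarith [this.2]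
  · subst ha; rw [abs_zero] at h; exact absurd h (not_lt.2 (abs_nonneg b))
  · rw [sgn_of_pos ha, sgn_of_pos]
    have := abs_lt.mp h
    rw [abs_of_pos ha] at this
    linarith [this.1]

lemma sgn_combo {a b u v : ℝ} (ha : 0 < a) (hb : 0 < b) (h : sgn u = sgn v) :
    sgn (a * u + b * v) = sgn u := by
  rcases lt_trichotomy u 0 with hu|hu|hu
  · have hv : v < 0 := by
      by_contra hv
      rcases eq_or_lt_of_le (not_lt.mp hv) with h'|h'
      · rw [sgn_of_neg hu, ← h', sgn_zero] at h; exact absurd h (by decide)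
      · rw [sgn_of_neg hu, sgn_of_pos h'] at h; exact absurd h (by decide)
    rw [sgn_of_neg hu, sgn_of_neg (by nlinarith)]
  · have hv : v = 0 := by rw [hu, sgn_zero] at h; exact sgn_eq_zero_iff.mp h.symm
    rw [hu, hv]; simp [sgn_zero]
  · have hv : 0 < v := by
      by_contra hv
      rcases eq_or_lt_of_le (not_lt.mp hv) with h'|h'
      · rw [sgn_of_pos hu, h', sgn_zero] at h; exact absurd h (by decide)
      · rw [sgn_of_pos hu, sgn_of_neg h'] at h; exact absurd h (by decide)
    rw [sgn_of_pos hu, sgn_of_pos (by nlinarith)]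

variable {V : Type} [AddCommGroup V] [Module ℝ V]

/-- Sign stability under small additive perturbation. -/
lemma sgn_perturb {a b : ℝ} (ha : a ≠ 0) {ε : ℝ} (hε : 0 < ε)
    (hlt : ε < |a| / (|b| + 1)) : sgn (a + ε * b) = sgn a := by
  apply sgn_add_of_abs_lt
  have h1 : |ε * b| = ε * |b| := by rw [abs_mul, abs_of_pos hε]
  have h2 : ε * (|b| + 1) < |a| := (lt_div_iff₀ (by positivity)).mp hlt
  rw [h1]; nlinarith [abs_nonneg b]

/-- Perturbation: signs of finitely many nonvanishing functionals are stable. -/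
lemma pert (T : Finset ℕ) (g : ℕ → V →ₗ[ℝ] ℝ) (x w : V) (hx : ∀ i ∈ T, g i x ≠ 0) :
    ∃ ε : ℝ, 0 < ε ∧ ∀ i ∈ T, sgn (g i (x + ε • w)) = sgn (g i x) := by
  classical
  rcases T.eq_empty_or_nonempty with rfl | hne
  · exact ⟨1, one_pos, by simp⟩
  set δ : ℕ → ℝ := fun i => |g i x| / (|g i w| + 1) with hδ
  obtain ⟨i₀, hi₀, hval⟩ := T.exists_mem_eq_inf' hne δ
  set ε := T.inf' hne δ / 2 with hεdef
  have hδpos : ∀ i ∈ T, 0 < δ i := fun i hi =>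
    div_pos (abs_pos.mpr (hx i hi)) (by positivity)
  have hεpos : 0 < ε := by
    rw [hεdef, hval]; exact half_pos (hδpos i₀ hi₀)
  refine ⟨ε, hεpos, fun i hi => ?_⟩
  have hlt : ε < δ i := by
    have h1 : T.inf' hne δ ≤ δ i := Finset.inf'_le δ hi
    have h2 : 0 < T.inf' hne δ := by rw [hval]; exact hδpos i₀ hi₀
    rw [hεdef]; linarith
  rw [map_add, map_smul, smul_eq_mul]
  exact sgn_perturb (hx i hi) hεpos hlt

section Functionals
variable {M : Type*} [AddCommGroup M] [Module ℝ M]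

lemma smul_of_ker_le (h g : M →ₗ[ℝ] ℝ) (hh : h ≠ 0) (H : ∀ x, h x = 0 → g x = 0) :
    ∃ c : ℝ, g = c • h := by
  obtain ⟨v, hv⟩ : ∃ v, h v ≠ 0 := by
    by_contra hc; push_neg at hc; exact hh (LinearMap.ext fun x => by simp [hc x])
  refine ⟨g v / h v, LinearMap.ext fun x => ?_⟩
  have hker : h (x - (h x / h v) • v) = 0 := by
    rw [map_sub, map_smul, smul_eq_mul, div_mul_cancel₀ _ hv, sub_self]
  have := H _ hker
  rw [map_sub, map_smul, smul_eq_mul, sub_eq_zero] at this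
  rw [LinearMap.smul_apply, smul_eq_mul]
  rw [this]; ring

lemma li_iff_sum (v : ℕ → M) (S : Finset ℕ) :
    LinearIndependent ℝ (fun i : S => v i.1) ↔
      ∀ g : ℕ → ℝ, ∑ i ∈ S, g i • v i = 0 → ∀ i ∈ S, g i = 0 := by
  classical
  constructor
  · intro hli g hsum i hi
    have h1 := Fintype.linearIndependent_iff.mp hli (fun j => g j.1)
    have h2 : ∑ j : S, g j.1 • v j.1 = ∑ j ∈ S, g j • v j := by
      rw [Finset.univ_eq_attach, Finset.sum_attach S (fun j => g j • v j)]
    exact h1 (by rw [h2]; exact hsum) ⟨i, hi⟩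
  · intro H
    apply Fintype.linearIndependent_iff.mpr
    intro g' hsum i
    set g : ℕ → ℝ := fun n => if hn : n ∈ S then g' ⟨n, hn⟩ else 0 with hg
    have h2 : ∑ j ∈ S, g j • v j = ∑ j : S, g' j • v j.1 := by
      rw [Finset.univ_eq_attach, ← Finset.sum_attach S (fun j => g j • v j)]
      exact Finset.sum_congr rfl fun j _ => by simp [hg, j.2]
    have h3 := H g (by rw [h2]; exact hsum) i.1 i.2
    simpa [hg, i.2] using h3
end Functionals




namespace NArr
variable (A : NArr V)

lemma indep_iff_sum (S : Finset ℕ) :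
    A.Indep S ↔ S ⊆ A.E ∧ ∀ g : ℕ → ℝ, ∑ i ∈ S, g i • A.f i = 0 → ∀ i ∈ S, g i = 0 := by
  unfold NArr.Indep; rw [li_iff_sum]

variable {A}

lemma Indep.subset_E {S : Finset ℕ} (h : A.Indep S) : S ⊆ A.E := h.1

lemma Indep.mono {S T : Finset ℕ} (h : A.Indep T) (hs : S ⊆ T) : A.Indep S := by
  classical
  rw [indep_iff_sum] at h ⊢
  refine ⟨hs.trans h.1, fun g hg i hi => ?_⟩
  set g' : ℕ → ℝ := fun n => if n ∈ S then g n else 0 with hg'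
  have hsum : ∑ i ∈ T, g' i • A.f i = 0 := by
    rw [← Finset.sum_subset hs (fun x _ hx => by simp [hg', hx])]
    rw [← hg]; exact Finset.sum_congr rfl fun j hj => by simp [hg', hj]
  have := h.2 g' hsum i (hs hi)
  simpa [hg', hi] using this

lemma indep_empty : A.Indep ∅ := by
  rw [indep_iff_sum]; exact ⟨Finset.empty_subset _, by simp⟩

lemma indep_singleton {i : ℕ} (hi : i ∈ A.E) : A.Indep {i} := by
  rw [indep_iff_sum]
  refine ⟨Finset.singleton_subset_iff.mpr hi, fun g hg j hj => ?_⟩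
  rw [Finset.mem_singleton] at hj; subst hj
  rw [Finset.sum_singleton] at hg
  rcases smul_eq_zero.mp hg with h | h
  · exact h
  · exact absurd h (A.nz j hi)

lemma exists_circuit_of_dep {S : Finset ℕ} (hS : S ⊆ A.E) (hd : ¬ A.Indep S) :
    ∃ T ⊆ S, A.IsCircuit T := by
  classical
  induction S using Finset.strongInduction with
  | _ S ih =>
    by_cases hmin : ∀ T ⊂ S, A.Indep T
    · exact ⟨S, Finset.Subset.refl S, hS, hd, hmin⟩
    · push_neg at hmin
      obtain ⟨T, hTS, hTd⟩ := hmin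
      obtain ⟨U, hUT, hU⟩ := ih T hTS (hTS.subset.trans hS) hTd
      exact ⟨U, hUT.trans hTS.subset, hU⟩

lemma IsCircuit.dep_support {T : Finset ℕ} (hC : A.IsCircuit T) :
    ∃ g : ℕ → ℝ, ∑ i ∈ T, g i • A.f i = 0 ∧ ∀ i ∈ T, g i ≠ 0 := by
  classical
  obtain ⟨hTE, hTd, hmin⟩ := hC
  rw [indep_iff_sum, not_and_or] at hTd
  rcases hTd with h | h
  · exact absurd hTE h
  push_neg at h
  obtain ⟨g, hg0, i₀, hi₀, hgi₀⟩ := h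
  refine ⟨g, hg0, fun i₁ hi₁ => ?_⟩
  intro hz
  have herase : ¬ A.Indep (T.erase i₁) := by
    rw [indep_iff_sum]
    rintro ⟨-, H⟩
    have hsum : ∑ i ∈ T.erase i₁, g i • A.f i = 0 := by
      rwa [Finset.sum_erase _ (by rw [hz, zero_smul])]
    exact hgi₀ (H g hsum i₀ (Finset.mem_erase.mpr ⟨fun h => hgi₀ (h ▸ hz), hi₀⟩))
  exact herase (hmin _ (Finset.erase_ssubset hi₁))

lemma IsCircuit.nonempty {T : Finset ℕ} (hC : A.IsCircuit T) : T.Nonempty := by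
  rcases T.eq_empty_or_nonempty with rfl | h
  · exact absurd indep_empty hC.2.1
  · exact h

lemma IsCircuit.not_singleton {T : Finset ℕ} (hC : A.IsCircuit T) (i : ℕ) : T ≠ {i} := by
  rintro rfl
  exact hC.2.1 (indep_singleton (hC.1 (Finset.mem_singleton_self i)))

lemma IsCircuit.one_lt_card {T : Finset ℕ} (hC : A.IsCircuit T) : 1 < T.card := by
  rcases hC.nonempty with ⟨i, hi⟩
  rcases Finset.eq_singleton_or_nontrivial hi with h | h
  · exact absurd h (hC.not_singleton i)
  · exact Finset.one_lt_card.mpr h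

/-- A dependent pair of hyperplanes consists of proportional forms. -/
lemma pair_dep {i j : ℕ} (hi : i ∈ A.E) (hj : j ∈ A.E) (hij : i ≠ j)
    (hd : ¬ A.Indep {i, j}) : ∃ c : ℝ, c ≠ 0 ∧ A.f i = c • A.f j := by
  classical
  obtain ⟨T, hTsub, hT⟩ := exists_circuit_of_dep (by
    intro x hx; rcases Finset.mem_insert.mp hx with rfl | hx
    · exact hi
    · rw [Finset.mem_singleton] at hx; exact hx ▸ hj) hd
  have hTeq : T = {i, j} := by
    apply Finset.eq_of_subset_of_card_le hTsub
    have h1 : ({i, j} : Finset ℕ).card = 2 := Finset.card_pair hij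
    rw [h1]; exact hT.one_lt_card
  subst hTeq
  obtain ⟨g, hg0, hgne⟩ := hT.dep_support
  have hgi := hgne i (Finset.mem_insert_self i _)
  have hgj := hgne j (Finset.mem_insert_of_mem (Finset.mem_singleton_self j))
  rw [Finset.sum_insert (by simp [hij]), Finset.sum_singleton] at hg0
  refine ⟨-(g j) / g i, by simp [hgi, hgj], ?_⟩
  have : g i • A.f i = -(g j) • A.f j := by
    rw [neg_smul (M := V →ₗ[ℝ] ℝ), eq_comm, neg_eq_iff_add_eq_zero, add_comm]; exact hg0
  ext x
  have hx := congrArg (fun φ => φ x) this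
  simp only [LinearMap.smul_apply, smul_eq_mul] at hx ⊢
  field_simp
  linarith [hx]

end NArr

namespace NArr
variable {A : NArr V}

lemma le_last {i : ℕ} (hi : i ∈ A.E) : i ≤ A.last := Finset.le_sup (f := id) hi

lemma last_mem (h : A.E.Nonempty) : A.last ∈ A.E := by
  have h1 : A.last = A.E.max' h := by
    apply le_antisymm
    · exact Finset.sup_le fun i hi => A.E.le_max' i hi
    · exact le_last (A.E.max'_mem h)
  rw [h1]; exact A.E.max'_mem h

lemma lt_last {i : ℕ} (hi : i ∈ A.E.erase A.last) : i < A.last :=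
  lt_of_le_of_ne (le_last (Finset.mem_of_mem_erase hi)) (Finset.ne_of_mem_erase hi)

lemma resE_subset : A.resE ⊆ A.E.erase A.last := Finset.filter_subset _ _

lemma mem_resE {i : ℕ} :
    i ∈ A.resE ↔ i ∈ A.E.erase A.last ∧
      ((A.f i).domRestrict (LinearMap.ker (A.f A.last)) ≠ 0 ∧
        ∀ j ∈ A.E.erase A.last,
          LinearMap.ker (A.f j) ⊓ LinearMap.ker (A.f A.last) =
            LinearMap.ker (A.f i) ⊓ LinearMap.ker (A.f A.last) → i ≤ j) :=
  Finset.mem_filter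

lemma IsChamber.ne_zero {C : ℕ → SignType} (h : A.IsChamber C) {i : ℕ} (hi : i ∈ A.E) :
    C i ≠ 0 := h.1 i hi

lemma IsChamber.eq_zero {C : ℕ → SignType} (h : A.IsChamber C) {i : ℕ} (hi : i ∉ A.E) :
    C i = 0 := h.2.1 i hi

lemma IsChamber.witness {C : ℕ → SignType} (h : A.IsChamber C) :
    ∃ x, ∀ i ∈ A.E, sgn (A.f i x) = C i := h.2.2

lemma delete_E (A : NArr V) : A.delete.E = A.E.erase A.last := rfl
lemma delete_f (A : NArr V) : A.delete.f = A.f := rfl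
lemma restrict_E (A : NArr V) : A.restrict.E = A.resE := rfl
lemma restrict_f (A : NArr V) (i : ℕ) :
    A.restrict.f i = (A.f i).domRestrict (LinearMap.ker (A.f A.last)) := rfl

/-- the chamber of the deletion containing a chamber of `A` -/
lemma IsChamber.delete {C : ℕ → SignType} (h : A.IsChamber C) :
    A.delete.IsChamber (restrictSigns (A.E.erase A.last) C) := by
  obtain ⟨x, hx⟩ := h.witness
  refine ⟨fun i hi => ?_, fun i hi => ?_, x, fun i hi => ?_⟩ <;>
    rw [delete_E] at hi
  · rw [restrictSigns, if_pos hi]; exact h.ne_zero (Finset.mem_of_mem_erase hi)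
  · rw [restrictSigns, if_neg hi]
  · rw [restrictSigns, if_pos hi, delete_f]; exact hx i (Finset.mem_of_mem_erase hi)

/-- the chamber of the restriction containing the wall of an `upper` chamber -/
lemma upper_chamber_restrict {B C : ℕ → SignType} (h : A.IsChamber C)
    (hu : A.upperCond B C) :
    A.restrict.IsChamber (restrictSigns A.resE C) := by
  obtain ⟨x, hx0, hx⟩ := hu.2
  refine ⟨fun i hi => ?_, fun i hi => ?_, ⟨x, hx0⟩, fun i hi => ?_⟩ <;>
    rw [restrict_E] at hi
  · rw [restrictSigns, if_pos hi]
    exact h.ne_zero (Finset.mem_of_mem_erase (resE_subset hi))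
  · rw [restrictSigns, if_neg hi]
  · rw [restrictSigns, if_pos hi, restrict_f]
    exact hx i (resE_subset hi)

lemma chambers_finite (A : NArr V) : {C | A.IsChamber C}.Finite := by
  classical
  apply Set.Finite.of_finite_image (f := fun (C : ℕ → SignType) => fun i : A.E => C i.1)
  · exact Set.toFinite _
  · intro C hC D hD hCD
    funext i
    by_cases hi : i ∈ A.E
    · exact congrFun hCD ⟨i, hi⟩
    · rw [hC.eq_zero hi, hD.eq_zero hi]

lemma nbc_subsets_finite (A : NArr V) (P : Finset ℕ → Prop) :
    {S | S ∈ A.nbc ∧ P S}.Finite := by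
  apply Set.Finite.subset (A.E.powerset.finite_toSet)
  intro S hS
  simpa [Finset.mem_powerset] using hS.1.1.1

lemma chamber_zero_of_empty (h : A.E = ∅) {C : ℕ → SignType} (hC : A.IsChamber C) :
    C = fun _ => 0 := funext fun i => hC.eq_zero (by simp [h])

lemma isChamber_zero_of_empty (h : A.E = ∅) : A.IsChamber (fun _ => 0) :=
  ⟨fun i hi => by simp [h] at hi, fun _ _ => rfl, ⟨0, fun i hi => by simp [h] at hi⟩⟩

end NArr

lemma IsJO.eta_subset {A : NArr V} {B : ℕ → SignType} {η : (ℕ → SignType) → Finset ℕ}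
    (h : IsJO V A B η) : ∀ C, A.IsChamber C → η C ⊆ A.E := by
  induction h with
  | base A B η hE hη => intro C _; rw [hη C]; exact Finset.empty_subset _
  | step A B η η' η'' hne h' h'' hnotup hup ih' ih'' =>
    intro C hC
    by_cases hu : A.upperCond B C
    · rw [hup C hC hu]
      intro i hi
      rcases Finset.mem_insert.mp hi with rfl | hi
      · exact NArr.last_mem hne
      · exact Finset.mem_of_mem_erase (NArr.resE_subset
          (by rw [← NArr.restrict_E]; exact ih'' _ (NArr.upper_chamber_restrict hC hu) hi))
    · rw [hnotup C hC hu]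
      exact fun i hi => Finset.mem_of_mem_erase
        (by rw [← NArr.delete_E]; exact ih' _ (hC.delete) hi)

namespace NArr
variable {A : NArr V}

lemma dep_of_rel {S : Finset ℕ} (g : ℕ → ℝ) (hsum : ∑ i ∈ S, g i • A.f i = 0)
    {i₀ : ℕ} (hi₀ : i₀ ∈ S) (hg : g i₀ ≠ 0) : ¬ A.Indep S := fun h =>
  hg (((A.indep_iff_sum S).mp h).2 g hsum i₀ hi₀)

lemma circuit_pair {i j : ℕ} (hi : i ∈ A.E) (hj : j ∈ A.E) (hij : i ≠ j)
    (hd : ¬ A.Indep {i, j}) : A.IsCircuit {i, j} := by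
  refine ⟨?_, hd, fun U hU => ?_⟩
  · intro x hx
    rcases Finset.mem_insert.mp hx with rfl | hx
    · exact hi
    · rw [Finset.mem_singleton] at hx; exact hx ▸ hj
  · have hcard : U.card < 2 := by
      have := Finset.card_lt_card hU
      rwa [Finset.card_pair hij] at this
    rcases U.eq_empty_or_nonempty with rfl | ⟨x, hx⟩
    · exact indep_empty
    · have hUx : U = {x} := by
        apply Finset.eq_singleton_iff_unique_mem.mpr
        exact ⟨hx, fun y hy => Finset.card_le_one.mp (by omega) y hy x hx⟩
      subst hUx
      have : x ∈ A.E := by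
        have := hU.subset hx
        rcases Finset.mem_insert.mp this with rfl | h
        · exact hi
        · rw [Finset.mem_singleton] at h; exact h ▸ hj
      exact indep_singleton this

lemma indep_delete_iff {S : Finset ℕ} (hS : S ⊆ A.E.erase A.last) :
    A.delete.Indep S ↔ A.Indep S := by
  unfold NArr.Indep
  rw [delete_E, delete_f]
  constructor
  · rintro ⟨-, h⟩; exact ⟨hS.trans (Finset.erase_subset _ _), h⟩
  · rintro ⟨-, h⟩; exact ⟨hS, h⟩

lemma circuit_delete_iff {T : Finset ℕ} (hT : T ⊆ A.E.erase A.last) :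
    A.delete.IsCircuit T ↔ A.IsCircuit T := by
  constructor
  · rintro ⟨h1, h2, h3⟩
    refine ⟨hT.trans (Finset.erase_subset _ _), (indep_delete_iff hT).not.mp h2,
      fun U hU => (indep_delete_iff (hU.subset.trans hT)).mp (h3 U hU)⟩
  · rintro ⟨h1, h2, h3⟩
    refine ⟨hT, (indep_delete_iff hT).not.mpr h2,
      fun U hU => (indep_delete_iff (hU.subset.trans hT)).mpr (h3 U hU)⟩

lemma min'_ne_last_of_circuit {T : Finset ℕ} (hT : A.IsCircuit T) (h : A.last ∈ T) :
    T.min' hT.nonempty ≠ A.last := by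
  intro hmin
  apply hT.not_singleton A.last
  apply Finset.eq_singleton_iff_unique_mem.mpr
  refine ⟨h, fun y hy => le_antisymm (le_last (hT.1 hy)) (hmin ▸ T.min'_le y hy)⟩

/-- No-broken-circuit sets avoiding the last hyperplane are those of the deletion. -/
lemma nbc_nolast {S : Finset ℕ} (hl : A.last ∉ S) :
    S ∈ A.nbc ↔ S ∈ A.delete.nbc := by
  constructor
  · rintro ⟨hI, hB⟩
    have hSsub : S ⊆ A.E.erase A.last :=
      fun i hi => Finset.mem_erase.mpr ⟨fun h => hl (h ▸ hi), hI.1 hi⟩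
    refine ⟨(indep_delete_iff hSsub).mpr hI, ?_⟩
    rintro T ⟨T₀, hT₀, hne, rfl⟩ hTS
    exact hB _ ⟨T₀, (circuit_delete_iff hT₀.1).mp hT₀, hne, rfl⟩ hTS
  · rintro ⟨hI, hB⟩
    have hSsub : S ⊆ A.E.erase A.last := hI.1
    refine ⟨(indep_delete_iff hSsub).mp hI, ?_⟩
    rintro T ⟨T₀, hT₀, hne, rfl⟩ hTS
    by_cases hlast : A.last ∈ T₀
    · have h1 : A.last ∈ T₀.erase (T₀.min' hne) :=
        Finset.mem_erase.mpr ⟨(min'_ne_last_of_circuit hT₀ hlast).symm, hlast⟩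
      exact hl (hTS h1)
    · have hT₀sub : T₀ ⊆ A.E.erase A.last :=
        fun i hi => Finset.mem_erase.mpr ⟨fun h => hlast (h ▸ hi), hT₀.1 hi⟩
      exact hB _ ⟨T₀, (circuit_delete_iff hT₀sub).mpr hT₀, hne, rfl⟩ hTS

/-- In the degenerate case the last hyperplane belongs to no nbc set. -/
lemma deg_no_last {j : ℕ} (hj : j ∈ A.E.erase A.last)
    (hdeg : (A.f j).domRestrict (LinearMap.ker (A.f A.last)) = 0)
    {S : Finset ℕ} (hS : S ∈ A.nbc) : A.last ∉ S := by
  have hne : A.E.Nonempty := ⟨j, Finset.mem_of_mem_erase hj⟩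
  have hjE : j ∈ A.E := Finset.mem_of_mem_erase hj
  obtain ⟨c, hc⟩ := smul_of_ker_le (A.f A.last) (A.f j) (A.nz _ (last_mem hne))
    (fun x hx => by
      have := congrArg (fun φ => φ ⟨x, (LinearMap.mem_ker).mpr hx⟩) hdeg
      simpa using this)
  have hc0 : c ≠ 0 := by
    rintro rfl; rw [zero_smul] at hc; exact A.nz j hjE hc
  have hjl : j ≠ A.last := Finset.ne_of_mem_erase hj
  have hdep : ¬ A.Indep {j, A.last} := by
    apply dep_of_rel (fun i => if i = j then (1:ℝ) else -c)
      (by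
        rw [Finset.sum_pair hjl]
        show (if j = j then (1:ℝ) else -c) • A.f j +
          (if A.last = j then (1:ℝ) else -c) • A.f A.last = 0
        rw [if_pos rfl, if_neg (Ne.symm hjl), one_smul, neg_smul (M := V →ₗ[ℝ] ℝ), hc]
        simp)
      (Finset.mem_insert_self j _) (by norm_num)
  have hcirc := circuit_pair hjE (last_mem hne) hjl hdep
  have hmin : ({j, A.last} : Finset ℕ).min' ⟨j, Finset.mem_insert_self j _⟩ = j := by
    apply le_antisymm (Finset.min'_le _ _ (Finset.mem_insert_self j _))
    apply Finset.le_min'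
    intro y hy
    rcases Finset.mem_insert.mp hy with rfl | hy
    · exact le_refl _
    · rw [Finset.mem_singleton] at hy; subst hy
      exact Nat.le_of_lt (lt_last hj)
  intro hlS
  apply hS.2 {A.last} ⟨{j, A.last}, hcirc, ⟨j, Finset.mem_insert_self j _⟩, ?_⟩
    (Finset.singleton_subset_iff.mpr hlS)
  rw [hmin, Finset.erase_insert (by simpa using hjl)]

end NArr

lemma sum_fun_apply {M : Type*} [AddCommGroup M] [Module ℝ M]
    (S : Finset ℕ) (g : ℕ → ℝ) (φ : ℕ → M →ₗ[ℝ] ℝ) (x : M) :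
    (∑ i ∈ S, g i • φ i) x = ∑ i ∈ S, g i * φ i x := by
  simp [LinearMap.sum_apply, LinearMap.smul_apply, smul_eq_mul]

namespace NArr
variable {A : NArr V}

lemma pair_rel (hne : A.E.Nonempty) {i j : ℕ}
    (hi : (A.f i).domRestrict (LinearMap.ker (A.f A.last)) ≠ 0)
    (hj : (A.f j).domRestrict (LinearMap.ker (A.f A.last)) ≠ 0)
    (hflat : LinearMap.ker (A.f i) ⊓ LinearMap.ker (A.f A.last) =
      LinearMap.ker (A.f j) ⊓ LinearMap.ker (A.f A.last)) :
    ∃ c μ : ℝ, c ≠ 0 ∧ A.f i = c • A.f j + μ • A.f A.last ∧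
      (A.f i).domRestrict (LinearMap.ker (A.f A.last)) =
        c • (A.f j).domRestrict (LinearMap.ker (A.f A.last)) := by
  obtain ⟨c, hc⟩ := smul_of_ker_le ((A.f j).domRestrict _) ((A.f i).domRestrict _) hj
    (fun x hx => by
      have hx1 : (x : V) ∈ LinearMap.ker (A.f j) ⊓ LinearMap.ker (A.f A.last) :=
        ⟨LinearMap.mem_ker.mpr hx, x.2⟩
      rw [← hflat] at hx1
      exact hx1.1)
  have hc0 : c ≠ 0 := by rintro rfl; rw [zero_smul] at hc; exact hi hc
  obtain ⟨μ, hμ⟩ := smul_of_ker_le (A.f A.last) (A.f i - c • A.f j) (A.nz _ (last_mem hne))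
    (fun x hx => by
      have := congrArg (fun φ => φ (⟨x, LinearMap.mem_ker.mpr hx⟩ :
        LinearMap.ker (A.f A.last))) hc
      simp only [LinearMap.domRestrict_apply, LinearMap.smul_apply, smul_eq_mul] at this
      simp [this])
  refine ⟨c, μ, hc0, ?_, hc⟩
  have : A.f i - c • A.f j = μ • A.f A.last := hμ
  rw [← this]; abel

lemma flatrep
    (hndeg : ∀ i ∈ A.E.erase A.last, (A.f i).domRestrict (LinearMap.ker (A.f A.last)) ≠ 0)
    {j : ℕ} (hj : j ∈ A.E.erase A.last) :
    ∃ m ∈ A.resE, m ≤ j ∧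
      LinearMap.ker (A.f m) ⊓ LinearMap.ker (A.f A.last) =
        LinearMap.ker (A.f j) ⊓ LinearMap.ker (A.f A.last) := by
  classical
  set F := (A.E.erase A.last).filter (fun i =>
    LinearMap.ker (A.f i) ⊓ LinearMap.ker (A.f A.last) =
      LinearMap.ker (A.f j) ⊓ LinearMap.ker (A.f A.last)) with hF
  have hjF : j ∈ F := Finset.mem_filter.mpr ⟨hj, rfl⟩
  have hFne : F.Nonempty := ⟨j, hjF⟩
  set m := F.min' hFne with hm
  have hmF : m ∈ F := F.min'_mem hFne
  obtain ⟨hmE, hmflat⟩ := Finset.mem_filter.mp hmF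
  refine ⟨m, mem_resE.mpr ⟨hmE, hndeg m hmE, fun j2 hj2 h2 => ?_⟩, F.min'_le j hjF, hmflat⟩
  exact F.min'_le j2 (Finset.mem_filter.mpr ⟨hj2, h2.trans hmflat⟩)

lemma indep_insert_last_iff (hne : A.E.Nonempty) {S' : Finset ℕ} (hS' : S' ⊆ A.resE) :
    A.restrict.Indep S' ↔ A.Indep (insert A.last S') := by
  classical
  have hlastS' : A.last ∉ S' := fun h => Finset.ne_of_mem_erase (resE_subset (hS' h)) rfl
  have hsubE : insert A.last S' ⊆ A.E := by
    intro x hx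
    rcases Finset.mem_insert.mp hx with rfl | hx
    · exact last_mem hne
    · exact Finset.mem_of_mem_erase (resE_subset (hS' hx))
  rw [indep_iff_sum, indep_iff_sum, restrict_E]
  constructor
  · rintro ⟨-, H⟩
    refine ⟨hsubE, fun g hsum i hi => ?_⟩
    rw [Finset.sum_insert hlastS'] at hsum
    have hres : ∑ i ∈ S', g i • A.restrict.f i = 0 := by
      apply LinearMap.ext
      rintro ⟨x, hx⟩
      rw [sum_fun_apply, LinearMap.zero_apply]
      have := congrArg (fun φ => φ x) hsum
      simp only [LinearMap.add_apply, LinearMap.smul_apply, smul_eq_mul,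
        LinearMap.zero_apply] at this
      rw [sum_fun_apply] at this
      have hx0 : A.f A.last x = 0 := LinearMap.mem_ker.mp hx
      rw [hx0, mul_zero, zero_add] at this
      simpa [restrict_f] using this
    have hS'zero : ∀ i ∈ S', g i = 0 := H g hres
    rcases Finset.mem_insert.mp hi with rfl | hi
    · have : ∑ i ∈ S', g i • A.f i = 0 :=
        Finset.sum_eq_zero fun i hi => by rw [hS'zero i hi, zero_smul]
      rw [this, add_zero] at hsum
      rcases smul_eq_zero.mp hsum with h | h
      · exact h
      · exact absurd h (A.nz _ (last_mem hne))
    · exact hS'zero i hi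
  · rintro ⟨-, H⟩
    refine ⟨hS', fun g hsum i hi => ?_⟩
    obtain ⟨μ, hμ⟩ := smul_of_ker_le (A.f A.last) (∑ i ∈ S', g i • A.f i)
      (A.nz _ (last_mem hne)) (fun x hx => by
        have := congrArg (fun φ => φ (⟨x, LinearMap.mem_ker.mpr hx⟩ :
          LinearMap.ker (A.f A.last))) hsum
        simp only [sum_fun_apply, LinearMap.zero_apply] at this
        rw [sum_fun_apply]
        simpa [restrict_f] using this)
    set g' : ℕ → ℝ := fun n => if n = A.last then -μ else g n with hg'
    have hsum' : ∑ i ∈ insert A.last S', g' i • A.f i = 0 := by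
      rw [Finset.sum_insert hlastS']
      have h1 : g' A.last = -μ := by rw [hg']; simp
      have h2 : ∑ i ∈ S', g' i • A.f i = ∑ i ∈ S', g i • A.f i := by
        apply Finset.sum_congr rfl
        intro i hi
        have hil : i ≠ A.last := fun h => hlastS' (h ▸ hi)
        rw [hg']; simp only [if_neg hil]
      rw [h1, h2, hμ, neg_smul (M := V →ₗ[ℝ] ℝ), neg_add_cancel]
    have h3 := H g' hsum' i (Finset.mem_insert_of_mem hi)
    have hil : i ≠ A.last := fun h => hlastS' (h ▸ hi)
    rw [hg'] at h3; simpa [if_neg hil] using h3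

end NArr

lemma min'_eq_of_le {T : Finset ℕ} (hne : T.Nonempty) {a : ℕ} (ha : a ∈ T)
    (h : ∀ b ∈ T, a ≤ b) : T.min' hne = a :=
  le_antisymm (Finset.min'_le T a ha) (Finset.le_min' _ _ _ h)

namespace NArr
variable {A : NArr V}

lemma res_last : (A.f A.last).domRestrict (LinearMap.ker (A.f A.last)) = 0 := by
  apply LinearMap.ext; rintro ⟨x, hx⟩
  simpa using LinearMap.mem_ker.mp hx

/-- Key contradiction: a dependency among members of an nbc set of the restriction
together with one extra smaller hyperplane yields a broken circuit. -/
lemma no_dep_on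
    (hndeg : ∀ i ∈ A.E.erase A.last, (A.f i).domRestrict (LinearMap.ker (A.f A.last)) ≠ 0)
    {S' : Finset ℕ} (hS' : S' ∈ A.restrict.nbc) {R : Finset ℕ} (hR : R ⊆ S')
    (hRne : R.Nonempty) {m : ℕ} (hm : m ∈ A.E.erase A.last) (hmlt : ∀ i ∈ R, m < i)
    (d : ℕ → ℝ) (hd : ∀ i ∈ R, d i ≠ 0) (e : ℝ)
    (hsum : ∑ i ∈ R, d i • A.restrict.f i + e • A.restrict.f m = 0) : False := by
  classical
  have hne : A.E.Nonempty := ⟨m, Finset.mem_of_mem_erase hm⟩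
  have hS'res : S' ⊆ A.resE := by rw [← restrict_E]; exact hS'.1.1
  obtain ⟨m', hm'res, hm'le, hm'flat⟩ := flatrep hndeg hm
  obtain ⟨c, μ, hc0, hrel, hres⟩ := pair_rel hne (hndeg m hm)
    (hndeg m' (resE_subset hm'res)) hm'flat.symm
  have hm'R : m' ∉ R := fun h => absurd (lt_of_le_of_lt hm'le (hmlt m' h)) (lt_irrefl m')
  set U := insert m' R with hU
  have hUres : U ⊆ A.restrict.E := by
    rw [restrict_E]
    intro x hx
    rcases Finset.mem_insert.mp hx with rfl | hx
    · exact hm'res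
    · exact hS'res (hR hx)
  set g₂ : ℕ → ℝ := fun x => if x = m' then e * c else d x with hg₂
  have hsum₂ : ∑ i ∈ U, g₂ i • A.restrict.f i = 0 := by
    rw [hU, Finset.sum_insert hm'R]
    have h1 : g₂ m' = e * c := by rw [hg₂]; simp
    have h2 : ∑ i ∈ R, g₂ i • A.restrict.f i = ∑ i ∈ R, d i • A.restrict.f i := by
      apply Finset.sum_congr rfl
      intro i hi
      have : i ≠ m' := fun h => hm'R (h ▸ hi)
      rw [hg₂]; simp only [if_neg this]
    rw [h1, h2]
    have h3 : (e * c) • A.restrict.f m' = e • A.restrict.f m := by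
      have : A.restrict.f m = c • A.restrict.f m' := by
        rw [restrict_f, restrict_f]; exact hres
      rw [this, smul_smul]
    rw [h3, add_comm]; exact hsum
  obtain ⟨i₀, hi₀⟩ := hRne
  have hdep : ¬ A.restrict.Indep U := by
    apply dep_of_rel g₂ hsum₂ (Finset.mem_insert_of_mem hi₀)
    have : i₀ ≠ m' := fun h => hm'R (h ▸ hi₀)
    rw [hg₂]; simp only [if_neg this]; exact hd i₀ hi₀
  obtain ⟨T₂, hT₂U, hT₂⟩ := exists_circuit_of_dep hUres hdep
  by_cases hm'T₂ : m' ∈ T₂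
  · have hmin : T₂.min' hT₂.nonempty = m' := by
      apply min'_eq_of_le _ hm'T₂
      intro b hb
      rcases Finset.mem_insert.mp (hT₂U hb) with rfl | hb
      · exact le_refl _
      · exact hm'le.trans (Nat.le_of_lt (hmlt b hb))
    apply hS'.2 (T₂.erase m') ⟨T₂, hT₂, hT₂.nonempty, by rw [hmin]⟩
    intro x hx
    obtain ⟨hxm', hxT₂⟩ := Finset.mem_erase.mp hx
    rcases Finset.mem_insert.mp (hT₂U hxT₂) with rfl | hxR
    · exact absurd rfl hxm'
    · exact hR hxR
  · have hT₂R : T₂ ⊆ S' := by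
      intro x hx
      rcases Finset.mem_insert.mp (hT₂U hx) with rfl | hx
      · exact absurd hx hm'T₂
      · exact hR hx
    exact hT₂.2.1 (hS'.1.mono hT₂R)

end NArr

namespace NArr
variable {A : NArr V}

lemma erase_last_subset_resE
    (hndeg : ∀ i ∈ A.E.erase A.last, (A.f i).domRestrict (LinearMap.ker (A.f A.last)) ≠ 0)
    {S : Finset ℕ} (hS : S ∈ A.nbc) (hlast : A.last ∈ S) : S.erase A.last ⊆ A.resE := by
  classical
  intro i hi
  obtain ⟨hil, hiS⟩ := Finset.mem_erase.mp hi
  have hiE : i ∈ A.E := hS.1.1 hiS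
  have hierase : i ∈ A.E.erase A.last := Finset.mem_erase.mpr ⟨hil, hiE⟩
  have hne : A.E.Nonempty := ⟨i, hiE⟩
  apply mem_resE.mpr
  refine ⟨hierase, hndeg i hierase, fun j2 hj2 hflat => ?_⟩
  by_contra hcon
  push_neg at hcon
  -- hcon : j2 < i
  obtain ⟨c, μ, hc0, hrel, hres⟩ := pair_rel hne (hndeg i hierase) (hndeg j2 hj2) hflat.symm
  have hj2E : j2 ∈ A.E := Finset.mem_of_mem_erase hj2
  have hj2i : j2 ≠ i := Nat.ne_of_lt hcon
  by_cases hμ : μ = 0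
  · -- {j2, i} is a circuit with broken circuit {i} ⊆ S
    have hrel' : A.f i = c • A.f j2 := by rw [hrel, hμ, zero_smul, add_zero]
    have hdep : ¬ A.Indep {j2, i} := by
      apply dep_of_rel (fun x => if x = i then (1:ℝ) else -c) ?_
        (Finset.mem_insert_of_mem (Finset.mem_singleton_self i)) (by norm_num)
      rw [Finset.sum_pair hj2i]
      simp only [eq_self_iff_true, if_true, if_neg hj2i]
      rw [one_smul, neg_smul (M := V →ₗ[ℝ] ℝ), hrel']; abel
    have hcirc := circuit_pair hj2E hiE hj2i hdep
    have hmin : ({j2, i} : Finset ℕ).min' hcirc.nonempty = j2 := by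
      apply min'_eq_of_le _ (Finset.mem_insert_self _ _)
      intro b hb
      rcases Finset.mem_insert.mp hb with rfl | hb
      · exact le_refl _
      · rw [Finset.mem_singleton] at hb; subst hb; exact Nat.le_of_lt hcon
    apply hS.2 {i} ⟨{j2, i}, hcirc, hcirc.nonempty, ?_⟩ (Finset.singleton_subset_iff.mpr hiS)
    rw [hmin, Finset.erase_insert (by simpa using hj2i)]
  · -- {j2, i, last} is a circuit with broken circuit {i, last} ⊆ S
    have hilast : i ≠ A.last := hil
    have hj2last : j2 ≠ A.last := Finset.ne_of_mem_erase hj2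
    have hiT : i ∉ ({A.last} : Finset ℕ) := by simpa using hilast
    have hj2T : j2 ∉ insert i ({A.last} : Finset ℕ) := by
      simp only [Finset.mem_insert, Finset.mem_singleton]
      push_neg; exact ⟨hj2i, hj2last⟩
    set T : Finset ℕ := insert j2 (insert i {A.last}) with hT
    have hTE : T ⊆ A.E := by
      intro x hx
      rw [hT] at hx
      rcases Finset.mem_insert.mp hx with rfl | hx
      · exact hj2E
      rcases Finset.mem_insert.mp hx with rfl | hx
      · exact hiE
      · rw [Finset.mem_singleton] at hx; subst hx; exact last_mem hne
    have hdep : ¬ A.Indep T := by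
      apply dep_of_rel (fun x => if x = i then (1:ℝ) else if x = j2 then -c else -μ) ?_
        (by rw [hT]; exact Finset.mem_insert_of_mem (Finset.mem_insert_self _ _)) (by norm_num)
      rw [hT, Finset.sum_insert hj2T, Finset.sum_insert hiT, Finset.sum_singleton]
      simp only [eq_self_iff_true, if_true, if_neg hj2i, if_neg (Ne.symm hj2i),
        if_neg (Ne.symm hilast), if_neg (Ne.symm hj2last)]
      rw [one_smul, neg_smul (M := V →ₗ[ℝ] ℝ), neg_smul (M := V →ₗ[ℝ] ℝ), hrel]; abel
    -- each pair inside T is independent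
    have hpair1 : A.Indep {i, A.last} := hS.1.mono (by
      intro x hx
      rcases Finset.mem_insert.mp hx with rfl | hx
      · exact hiS
      · rw [Finset.mem_singleton] at hx; subst hx; exact hlast)
    have hpair2 : A.Indep {j2, A.last} := by
      by_contra hdp
      obtain ⟨a, ha0, ha⟩ := pair_dep hj2E (last_mem hne) hj2last hdp
      apply hndeg j2 hj2
      rw [LinearMap.domRestrict, ha]
      ext x
      simp only [LinearMap.smul_apply, LinearMap.comp_apply, LinearMap.zero_apply]
      have : A.f A.last x.1 = 0 := LinearMap.mem_ker.mp x.2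
      simp [this]
    have hpair3 : A.Indep {j2, i} := by
      by_contra hdp
      obtain ⟨a, ha0, ha⟩ := pair_dep hj2E hiE hj2i hdp
      -- f j2 = a • f i, so (1 - c*a) f i = μ f last
      have h1 : (1 - c * a) • A.f i = μ • A.f A.last := by
        have hthis : A.f i = c • (a • A.f i) + μ • A.f A.last := by rw [← ha]; exact hrel
        rw [smul_smul] at hthis
        rw [sub_smul (M := V →ₗ[ℝ] ℝ), one_smul]
        nth_rewrite 1 [hthis]
        abel
      by_cases hca : 1 - c * a = 0
      · rw [hca, zero_smul, eq_comm] at h1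
        rcases smul_eq_zero.mp h1 with h | h
        · exact hμ h
        · exact A.nz _ (last_mem hne) h
      · apply hndeg i hierase
        have h2 : A.f i = ((1 - c * a)⁻¹ * μ) • A.f A.last := by
          rw [mul_smul, ← h1, smul_smul, inv_mul_cancel₀ hca, one_smul]
        rw [LinearMap.domRestrict, h2]
        ext x
        simp only [LinearMap.smul_apply, LinearMap.comp_apply, LinearMap.zero_apply]
        have : A.f A.last x.1 = 0 := LinearMap.mem_ker.mp x.2
        simp [this]
    have hcirc : A.IsCircuit T := by
      refine ⟨hTE, hdep, fun U hUT => ?_⟩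
      obtain ⟨t, htT, htU⟩ := Finset.exists_of_ssubset hUT
      have hUsub : U ⊆ T.erase t :=
        fun x hx => Finset.mem_erase.mpr ⟨fun h => htU (h ▸ hx), hUT.subset hx⟩
      rw [hT] at htT
      rcases Finset.mem_insert.mp htT with rfl | ht
      · apply Indep.mono _ hUsub
        rw [hT, Finset.erase_insert hj2T]
        exact hpair1
      rcases Finset.mem_insert.mp ht with rfl | ht
      · apply Indep.mono _ hUsub
        have : T.erase t = {j2, A.last} := by
          ext x
          rw [hT]
          simp only [Finset.mem_erase, Finset.mem_insert, Finset.mem_singleton]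
          omega
        rw [this]; exact hpair2
      · rw [Finset.mem_singleton] at ht; subst ht
        apply Indep.mono _ hUsub
        have : T.erase A.last = {j2, i} := by
          ext x
          rw [hT]
          simp only [Finset.mem_erase, Finset.mem_insert, Finset.mem_singleton]
          omega
        rw [this]; exact hpair3
    have hmin : T.min' hcirc.nonempty = j2 := by
      apply min'_eq_of_le _ (by rw [hT]; exact Finset.mem_insert_self _ _)
      intro b hb
      rw [hT] at hb
      rcases Finset.mem_insert.mp hb with rfl | hb
      · exact le_refl _
      rcases Finset.mem_insert.mp hb with rfl | hb
      · exact Nat.le_of_lt hcon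
      · rw [Finset.mem_singleton] at hb; subst hb
        exact Nat.le_of_lt (hcon.trans (lt_last hierase))
    apply hS.2 (insert i {A.last}) ⟨T, hcirc, hcirc.nonempty, ?_⟩ ?_
    · rw [hmin, hT, Finset.erase_insert hj2T]
    · intro x hx
      rcases Finset.mem_insert.mp hx with rfl | hx
      · exact hiS
      · rw [Finset.mem_singleton] at hx; subst hx; exact hlast

end NArr

namespace NArr
variable {A : NArr V}

lemma restrict_sum {T : Finset ℕ} {g : ℕ → ℝ} (h : ∑ i ∈ T, g i • A.f i = 0) :
    ∑ i ∈ T, g i • A.restrict.f i = 0 := by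
  apply LinearMap.ext
  rintro ⟨x, hx⟩
  rw [sum_fun_apply, LinearMap.zero_apply]
  have := congrArg (fun φ => φ x) h
  simp only [sum_fun_apply, LinearMap.zero_apply] at this
  simpa [restrict_f] using this

lemma last_not_mem_resE_subset {T : Finset ℕ} (hT : T ⊆ A.resE) : A.last ∉ T :=
  fun h => Finset.ne_of_mem_erase (resE_subset (hT h)) rfl

/-- A circuit of the restriction is a circuit of `A`, possibly after adding the
last hyperplane. -/
lemma circuit_restrict_lift (hne : A.E.Nonempty) {T'' : Finset ℕ}
    (hT'' : A.restrict.IsCircuit T'') :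
    A.IsCircuit T'' ∨ A.IsCircuit (insert A.last T'') := by
  classical
  have hT''res : T'' ⊆ A.resE := by rw [← restrict_E]; exact hT''.1
  have hT''E : T'' ⊆ A.E :=
    fun x hx => Finset.mem_of_mem_erase (resE_subset (hT''res hx))
  have hlastT'' : A.last ∉ T'' := last_not_mem_resE_subset hT''res
  obtain ⟨d, hdsum, hdne⟩ := hT''.dep_support
  obtain ⟨i₀, hi₀⟩ := hT''.nonempty
  obtain ⟨μ, hμrel⟩ := smul_of_ker_le (A.f A.last) (∑ i ∈ T'', d i • A.f i)
    (A.nz _ (last_mem hne)) (fun x hx => by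
      have := congrArg (fun φ => φ (⟨x, LinearMap.mem_ker.mpr hx⟩ :
        LinearMap.ker (A.f A.last))) hdsum
      simp only [sum_fun_apply, LinearMap.zero_apply] at this
      rw [sum_fun_apply]
      simpa [restrict_f] using this)
  have hindep_sub : ∀ U ⊂ T'', A.Indep U := by
    intro U hU
    have hUres : U ⊆ A.resE := hU.subset.trans hT''res
    exact ((indep_insert_last_iff hne hUres).mp (hT''.2.2 U hU)).mono
      (Finset.subset_insert _ _)
  by_cases hμ : μ = 0
  · left
    refine ⟨hT''E, ?_, hindep_sub⟩
    apply dep_of_rel d (by rw [hμrel, hμ, zero_smul]) hi₀ (hdne i₀ hi₀)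
  · right
    -- independence of T'' in A
    have hT''indep : A.Indep T'' := by
      by_contra hdep
      obtain ⟨T₂, hT₂sub, hT₂⟩ := exists_circuit_of_dep hT''E hdep
      have hT₂eq : T₂ = T'' := by
        rcases eq_or_ne T₂ T'' with h | h
        · exact h
        · exfalso
          obtain ⟨d₂, hd₂sum, hd₂ne⟩ := hT₂.dep_support
          obtain ⟨j₀, hj₀⟩ := hT₂.nonempty
          have hli := (hT''.2.2 T₂ (Finset.ssubset_iff_subset_ne.mpr ⟨hT₂sub, h⟩)).2
          exact hd₂ne j₀ hj₀ (((li_iff_sum _ _).mp hli) d₂ (restrict_sum hd₂sum) j₀ hj₀)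
      have hT''circA : A.IsCircuit T'' := hT₂eq ▸ hT₂
      obtain ⟨d₂, hd₂sum, hd₂ne⟩ := hT''circA.dep_support
      set lam := d i₀ / d₂ i₀ with hlam
      set h : ℕ → ℝ := fun i => d i - lam * d₂ i with hh
      have hd₂i₀ : d₂ i₀ ≠ 0 := hd₂ne i₀ hi₀
      have hht₀ : h i₀ = 0 := by
        rw [hh, hlam]; field_simp; ring
      have hhsum : ∑ i ∈ T'', h i • A.f i = μ • A.f A.last := by
        rw [hh]
        have : ∑ i ∈ T'', (d i - lam * d₂ i) • A.f i =
            ∑ i ∈ T'', d i • A.f i - lam • ∑ i ∈ T'', d₂ i • A.f i := by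
          rw [Finset.smul_sum, ← Finset.sum_sub_distrib]
          apply Finset.sum_congr rfl
          intro i _
          rw [sub_smul (M := V →ₗ[ℝ] ℝ), smul_smul]
        rw [this, hd₂sum, smul_zero, sub_zero, hμrel]
      have hres0 : ∑ i ∈ T'', h i • A.restrict.f i = 0 := by
        have h2 : ∑ i ∈ T'', h i • A.f i - μ • A.f A.last = 0 := by
          rw [hhsum]; abel
        have h3 : ∑ i ∈ insert A.last T'',
            (fun x => if x = A.last then -μ else h x) i • A.f i = 0 := by
          rw [Finset.sum_insert hlastT'']
          simp only [eq_self_iff_true, if_true]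
          have heq2 : ∑ i ∈ T'', (fun x => if x = A.last then -μ else h x) i • A.f i =
              ∑ i ∈ T'', h i • A.f i := by
            apply Finset.sum_congr rfl
            intro i hi
            have hil : i ≠ A.last := fun hc => hlastT'' (hc ▸ hi)
            simp only [if_neg hil]
          rw [heq2, neg_smul (M := V →ₗ[ℝ] ℝ), hhsum, neg_add_cancel]
        have h4 := restrict_sum h3
        rw [Finset.sum_insert hlastT''] at h4
        simp only [eq_self_iff_true, if_true] at h4
        rw [restrict_f, res_last, smul_zero, zero_add] at h4
        rw [← h4]
        apply Finset.sum_congr rfl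
        intro i hi
        have hil : i ≠ A.last := fun hc => hlastT'' (hc ▸ hi)
        simp only [if_neg hil]
      by_cases hzero : ∀ i ∈ T''.erase i₀, h i = 0
      · -- then all h vanish, so the two dependencies are proportional: μ = 0
        have hall : ∀ i ∈ T'', h i = 0 := by
          intro i hi
          rcases eq_or_ne i i₀ with rfl | hii₀
          · exact hht₀
          · exact hzero i (Finset.mem_erase.mpr ⟨hii₀, hi⟩)
        have : μ • A.f A.last = 0 := by
          rw [← hhsum]
          exact Finset.sum_eq_zero fun i hi => by rw [hall i hi, zero_smul]
        rcases smul_eq_zero.mp this with h | h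
        · exact hμ h
        · exact A.nz _ (last_mem hne) h
      · push_neg at hzero
        obtain ⟨i₁, hi₁mem, hi₁⟩ := hzero
        have hsum' : ∑ i ∈ T''.erase i₀, h i • A.restrict.f i = 0 := by
          have h5 := Finset.sum_erase_add T'' (fun i => h i • A.restrict.f i) hi₀
          rw [hht₀, zero_smul, add_zero, hres0] at h5
          exact h5
        have hli := (hT''.2.2 _ (Finset.erase_ssubset hi₀)).2
        exact hi₁ (((li_iff_sum _ _).mp hli) h hsum' i₁ hi₁mem)
    -- now prove insert A.last T'' is a circuit
    have hTE : insert A.last T'' ⊆ A.E := by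
      intro x hx
      rcases Finset.mem_insert.mp hx with rfl | hx
      · exact last_mem hne
      · exact hT''E hx
    refine ⟨hTE, ?_, ?_⟩
    · have hi₀ne : i₀ ≠ A.last := fun hc => hlastT'' (hc ▸ hi₀)
      apply dep_of_rel (fun i => if i = A.last then -μ else d i) ?_
        (Finset.mem_insert_of_mem hi₀)
        (by show (if i₀ = A.last then -μ else d i₀) ≠ 0
            rw [if_neg hi₀ne]; exact hdne i₀ hi₀)
      rw [Finset.sum_insert hlastT'']
      simp only [eq_self_iff_true, if_true]
      have heq : ∑ i ∈ T'', (fun i => if i = A.last then -μ else d i) i • A.f i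
          = ∑ i ∈ T'', d i • A.f i := by
        apply Finset.sum_congr rfl
        intro i hi
        have : i ≠ A.last := fun hc => hlastT'' (hc ▸ hi)
        simp only [if_neg this]
      rw [heq, hμrel, neg_smul (M := V →ₗ[ℝ] ℝ), neg_add_cancel]
    · intro U hU
      obtain ⟨t, htT, htU⟩ := Finset.exists_of_ssubset hU
      have hUsub : U ⊆ (insert A.last T'').erase t :=
        fun x hx => Finset.mem_erase.mpr ⟨fun h => htU (h ▸ hx), hU.subset hx⟩
      rcases Finset.mem_insert.mp htT with rfl | ht
      · apply Indep.mono _ hUsub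
        rw [Finset.erase_insert hlastT'']
        exact hT''indep
      · apply Indep.mono _ hUsub
        have htne : t ≠ A.last := fun hc => hlastT'' (hc ▸ ht)
        have herase : (insert A.last T'').erase t = insert A.last (T''.erase t) := by
          ext x
          simp only [Finset.mem_erase, Finset.mem_insert]
          constructor
          · rintro ⟨hxt, rfl | hx⟩
            · exact Or.inl rfl
            · exact Or.inr ⟨hxt, hx⟩
          · rintro (rfl | ⟨h1, h2⟩)
            · exact ⟨Ne.symm htne, Or.inl rfl⟩
            · exact ⟨h1, Or.inr h2⟩
        rw [herase]
        rw [← indep_insert_last_iff hne ((Finset.erase_subset _ _).trans hT''res)]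
        exact hT''.2.2 _ (Finset.erase_ssubset ht)

end NArr

namespace NArr
variable {A : NArr V}

lemma min'_insert_last {T : Finset ℕ} (hT : T ⊆ A.resE) (hne : T.Nonempty)
    (h2 : (insert A.last T).Nonempty) :
    (insert A.last T).min' h2 = T.min' hne := by
  apply min'_eq_of_le _ (Finset.mem_insert_of_mem (T.min'_mem hne))
  intro b hb
  rcases Finset.mem_insert.mp hb with rfl | hb
  · exact Nat.le_of_lt ((T.min'_le _ (T.min'_mem hne)).trans_lt
      (lt_last (resE_subset (hT (T.min'_mem hne)))))
  · exact T.min'_le b hb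

lemma nbc_erase_last
    (hndeg : ∀ i ∈ A.E.erase A.last, (A.f i).domRestrict (LinearMap.ker (A.f A.last)) ≠ 0)
    {S : Finset ℕ} (hS : S ∈ A.nbc) (hl : A.last ∈ S) :
    S.erase A.last ∈ A.restrict.nbc := by
  have hne : A.E.Nonempty := ⟨A.last, hS.1.1 hl⟩
  have hsub : S.erase A.last ⊆ A.resE := erase_last_subset_resE hndeg hS hl
  have hins : insert A.last (S.erase A.last) = S := Finset.insert_erase hl
  refine ⟨(indep_insert_last_iff hne hsub).mpr (by rw [hins]; exact hS.1), ?_⟩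
  rintro T ⟨T'', hT'', hne'', rfl⟩ hTsub
  rcases circuit_restrict_lift hne hT'' with hc | hc
  · apply hS.2 (T''.erase (T''.min' hne'')) ⟨T'', hc, hne'', rfl⟩
    exact hTsub.trans (Finset.erase_subset _ _)
  · have hT''res : T'' ⊆ A.resE := by rw [← restrict_E]; exact hT''.1
    have hlastT'' : A.last ∉ T'' := last_not_mem_resE_subset hT''res
    have hinsne : (insert A.last T'').Nonempty := ⟨A.last, Finset.mem_insert_self _ _⟩
    apply hS.2 ((insert A.last T'').erase ((insert A.last T'').min' hinsne))
      ⟨insert A.last T'', hc, hinsne, rfl⟩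
    rw [min'_insert_last hT''res hne'']
    intro x hx
    obtain ⟨hx1, hx2⟩ := Finset.mem_erase.mp hx
    rcases Finset.mem_insert.mp hx2 with rfl | hx3
    · exact hl
    · have : x ∈ S.erase A.last := hTsub (Finset.mem_erase.mpr ⟨hx1, hx3⟩)
      exact Finset.mem_of_mem_erase this

lemma nbc_insert_last (hne : A.E.Nonempty)
    (hndeg : ∀ i ∈ A.E.erase A.last, (A.f i).domRestrict (LinearMap.ker (A.f A.last)) ≠ 0)
    {S' : Finset ℕ} (hS' : S' ∈ A.restrict.nbc) : insert A.last S' ∈ A.nbc := by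
  classical
  have hS'res : S' ⊆ A.resE := by rw [← restrict_E]; exact hS'.1.1
  refine ⟨(indep_insert_last_iff hne hS'res).mp hS'.1, ?_⟩
  rintro T ⟨T₀, hT₀, hne₀, rfl⟩ hTsub
  obtain ⟨d, hdsum, hdne⟩ := hT₀.dep_support
  set m := T₀.min' hne₀ with hm
  have hmT₀ : m ∈ T₀ := T₀.min'_mem hne₀
  have hmE : m ∈ A.E := hT₀.1 hmT₀
  have hres : ∑ i ∈ T₀, d i • A.restrict.f i = 0 := restrict_sum hdsum
  by_cases hlastT₀ : A.last ∈ T₀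
  · have hmlast : m ≠ A.last := min'_ne_last_of_circuit hT₀ hlastT₀
    have hmerase : m ∈ A.E.erase A.last := Finset.mem_erase.mpr ⟨hmlast, hmE⟩
    set T₀' := T₀.erase A.last with hT₀'
    have hmT₀' : m ∈ T₀' := Finset.mem_erase.mpr ⟨hmlast, hmT₀⟩
    set R := T₀'.erase m with hR
    have h2 : ∑ i ∈ T₀', d i • A.restrict.f i = 0 := by
      have h5 := Finset.sum_erase_add T₀ (fun i => d i • A.restrict.f i) hlastT₀
      rw [restrict_f, res_last, smul_zero, add_zero, hres] at h5
      exact h5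
    have h3 : ∑ i ∈ R, d i • A.restrict.f i + d m • A.restrict.f m = 0 := by
      have h5 := Finset.sum_erase_add T₀' (fun i => d i • A.restrict.f i) hmT₀'
      rw [h2] at h5
      exact h5
    have hRS' : R ⊆ S' := by
      intro x hx
      obtain ⟨hxm, hx2⟩ := Finset.mem_erase.mp hx
      obtain ⟨hxlast, hxT₀⟩ := Finset.mem_erase.mp hx2
      have : x ∈ insert A.last S' := hTsub (Finset.mem_erase.mpr ⟨hxm, hxT₀⟩)
      rcases Finset.mem_insert.mp this with rfl | h
      · exact absurd rfl hxlast
      · exact h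
    have hRne : R.Nonempty := by
      rcases R.eq_empty_or_nonempty with hRe | h
      · exfalso
        have hT₀eq : T₀ = {m, A.last} := by
          ext x
          simp only [Finset.mem_insert, Finset.mem_singleton]
          constructor
          · intro hx
            by_contra hc
            push_neg at hc
            have : x ∈ R := Finset.mem_erase.mpr ⟨hc.1, Finset.mem_erase.mpr ⟨hc.2, hx⟩⟩
            rw [hRe] at this
            exact absurd this (Finset.notMem_empty x)
          · rintro (rfl | rfl)
            · exact hmT₀
            · exact hlastT₀
        have hdp : ¬ A.Indep {m, A.last} := hT₀eq ▸ hT₀.2.1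
        obtain ⟨a, ha0, ha⟩ := pair_dep hmE (last_mem hne) hmlast hdp
        apply hndeg m hmerase
        rw [LinearMap.domRestrict, ha]
        ext x
        simp only [LinearMap.smul_apply, LinearMap.comp_apply, LinearMap.zero_apply]
        have : A.f A.last x.1 = 0 := LinearMap.mem_ker.mp x.2
        simp [this]
      · exact h
    have hmlt : ∀ i ∈ R, m < i := fun i hi => by
      obtain ⟨him, hi2⟩ := Finset.mem_erase.mp hi
      exact lt_of_le_of_ne (T₀.min'_le i (Finset.mem_of_mem_erase hi2)) (Ne.symm him)
    exact no_dep_on hndeg hS' hRS' hRne hmerase hmlt d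
      (fun i hi => hdne i (Finset.mem_of_mem_erase (Finset.mem_of_mem_erase hi)))
      (d m) h3
  · have hmlast : m ≠ A.last := fun h => hlastT₀ (h ▸ hmT₀)
    have hmerase : m ∈ A.E.erase A.last := Finset.mem_erase.mpr ⟨hmlast, hmE⟩
    set R := T₀.erase m with hR
    have h3 : ∑ i ∈ R, d i • A.restrict.f i + d m • A.restrict.f m = 0 := by
      have h5 := Finset.sum_erase_add T₀ (fun i => d i • A.restrict.f i) hmT₀
      rw [hres] at h5
      exact h5
    have hRS' : R ⊆ S' := by
      intro x hx
      have hxT₀ : x ∈ T₀ := Finset.mem_of_mem_erase hx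
      have : x ∈ insert A.last S' := hTsub hx
      rcases Finset.mem_insert.mp this with rfl | h
      · exact absurd hxT₀ hlastT₀
      · exact h
    have hRne : R.Nonempty := by
      rw [← Finset.card_pos, Finset.card_erase_of_mem hmT₀]
      have := hT₀.one_lt_card
      omega
    have hmlt : ∀ i ∈ R, m < i := fun i hi => by
      obtain ⟨him, hi2⟩ := Finset.mem_erase.mp hi
      exact lt_of_le_of_ne (T₀.min'_le i hi2) (Ne.symm him)
    exact no_dep_on hndeg hS' hRS' hRne hmerase hmlt d
      (fun i hi => hdne i (Finset.mem_of_mem_erase hi)) (d m) h3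

end NArr

lemma signtype_eq_neg {s t : SignType} (hs : s ≠ 0) (ht : t ≠ 0) (hst : s ≠ t) :
    s = -t := by
  cases s <;> cases t <;> simp_all <;> rfl

lemma signtype_neg_ne {t : SignType} (ht : t ≠ 0) : -t ≠ t := by
  cases t <;> simp_all

lemma signtype_neg_ne_zero {t : SignType} (ht : t ≠ 0) : -t ≠ 0 := by
  cases t <;> simp_all

lemma exists_sgn {M : Type*} [AddCommGroup M] [Module ℝ M] (φ : M →ₗ[ℝ] ℝ) (hφ : φ ≠ 0)
    (s : SignType) (hs : s ≠ 0) : ∃ w, sgn (φ w) = s := by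
  obtain ⟨w₀, hw₀⟩ : ∃ w₀, φ w₀ ≠ 0 := by
    by_contra hc; push_neg at hc; exact hφ (LinearMap.ext fun x => by simp [hc x])
  rcases lt_or_gt_of_ne hw₀ with h | h
  · cases s with
    | zero => exact absurd rfl hs
    | neg => exact ⟨w₀, by rw [sgn_of_neg h]; rfl⟩
    | pos => exact ⟨-w₀, by rw [map_neg, sgn_of_pos (by linarith)]; rfl⟩
  · cases s with
    | zero => exact absurd rfl hs
    | neg => exact ⟨-w₀, by rw [map_neg, sgn_of_neg (by linarith)]; rfl⟩
    | pos => exact ⟨w₀, by rw [sgn_of_pos h]; rfl⟩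

namespace NArr
variable {A : NArr V}

/-- Two chambers of `A` inducing the same chamber of the deletion and differing on
the last hyperplane give a cut witness. -/
lemma cut_of_two_lifts {C D : ℕ → SignType} (hC : A.IsChamber C) (hD : A.IsChamber D)
    (hne : A.E.Nonempty) (heq : ∀ i ∈ A.E.erase A.last, C i = D i)
    (hlast : C A.last ≠ D A.last) :
    ∃ z, A.f A.last z = 0 ∧ ∀ i ∈ A.E.erase A.last, sgn (A.f i z) = C i := by
  obtain ⟨x, hx⟩ := hC.witness
  obtain ⟨y, hy⟩ := hD.witness
  have hlmem := last_mem hne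
  have hxl : A.f A.last x ≠ 0 := fun h =>
    hC.ne_zero hlmem (by rw [← hx _ hlmem, h, sgn_zero])
  have hyl : A.f A.last y ≠ 0 := fun h =>
    hD.ne_zero hlmem (by rw [← hy _ hlmem, h, sgn_zero])
  have hsgn_ne : sgn (A.f A.last x) ≠ sgn (A.f A.last y) := by
    rw [hx _ hlmem, hy _ hlmem]; exact hlast
  -- f last x and f last y have opposite signs
  have hopp : (0 < A.f A.last x ∧ A.f A.last y < 0) ∨
      (A.f A.last x < 0 ∧ 0 < A.f A.last y) := by
    rcases lt_or_gt_of_ne hxl with h1 | h1 <;> rcases lt_or_gt_of_ne hyl with h2 | h2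
    · exact absurd (by rw [sgn_of_neg h1, sgn_of_neg h2]) hsgn_ne
    · exact Or.inr ⟨h1, h2⟩
    · exact Or.inl ⟨h1, h2⟩
    · exact absurd (by rw [sgn_of_pos h1, sgn_of_pos h2]) hsgn_ne
  rcases hopp with ⟨h1, h2⟩ | ⟨h1, h2⟩
  · refine ⟨(A.f A.last x) • y + (-(A.f A.last y)) • x, by simp; ring, fun i hi => ?_⟩
    rw [map_add, map_smul, map_smul, smul_eq_mul, smul_eq_mul]
    have hsxy : sgn (A.f i y) = sgn (A.f i x) := by
      rw [hx _ (Finset.mem_of_mem_erase hi), hy _ (Finset.mem_of_mem_erase hi)]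
      exact (heq i hi).symm
    rw [sgn_combo h1 (by linarith) hsxy, hsxy, hx _ (Finset.mem_of_mem_erase hi)]
  · refine ⟨(-(A.f A.last x)) • y + (A.f A.last y) • x, by simp; ring, fun i hi => ?_⟩
    rw [map_add, map_smul, map_smul, smul_eq_mul, smul_eq_mul]
    have hsxy : sgn (A.f i y) = sgn (A.f i x) := by
      rw [hx _ (Finset.mem_of_mem_erase hi), hy _ (Finset.mem_of_mem_erase hi)]
      exact (heq i hi).symm
    rw [sgn_combo (by linarith) h2 hsxy, hsxy, hx _ (Finset.mem_of_mem_erase hi)]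

end NArr

namespace NArr
variable {A : NArr V}

/-- L1: non-upper chambers biject with chambers of the deletion. -/
lemma bij_delete (hne : A.E.Nonempty) {B : ℕ → SignType} (hBl : B A.last ≠ 0) :
    Set.BijOn (restrictSigns (A.E.erase A.last))
      {C | A.IsChamber C ∧ ¬ A.upperCond B C} {C' | A.delete.IsChamber C'} := by
  classical
  constructor
  · rintro C ⟨hC, -⟩
    exact hC.delete
  constructor
  · rintro C ⟨hC, hCnu⟩ D ⟨hD, hDnu⟩ heq
    have heqe : ∀ i ∈ A.E.erase A.last, C i = D i := by
      intro i hi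
      have := congrFun heq i
      rwa [restrictSigns, restrictSigns, if_pos hi, if_pos hi] at this
    funext i
    by_cases hiE : i ∈ A.E
    · rcases eq_or_ne i A.last with rfl | hil
      · by_contra hlast
        obtain ⟨z, hz0, hz⟩ := cut_of_two_lifts hC hD hne heqe hlast
        have hCcut : A.upperCond B C ∨ C A.last = B A.last := by
          by_cases h : C A.last = B A.last
          · exact Or.inr h
          · exact Or.inl ⟨h, z, hz0, hz⟩
        have hDcut : A.upperCond B D ∨ D A.last = B A.last := by
          by_cases h : D A.last = B A.last
          · exact Or.inr h
          · refine Or.inl ⟨h, z, hz0, fun i hi => ?_⟩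
            rw [hz i hi]; exact heqe i hi
        rcases hCcut with h | h
        · exact hCnu h
        rcases hDcut with h' | h'
        · exact hDnu h'
        · exact hlast (h.trans h'.symm)
      · exact heqe i (Finset.mem_erase.mpr ⟨hil, hiE⟩)
    · rw [hC.eq_zero hiE, hD.eq_zero hiE]
  · rintro C' hC'
    obtain ⟨x, hx⟩ := hC'.witness
    have hlmem := last_mem hne
    -- perturb so that f last does not vanish
    obtain ⟨x₀, hx₀e, hx₀l⟩ : ∃ x₀, (∀ i ∈ A.E.erase A.last, sgn (A.f i x₀) = C' i) ∧
        A.f A.last x₀ ≠ 0 := by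
      by_cases hxl : A.f A.last x ≠ 0
      · exact ⟨x, fun i hi => hx i (by rwa [delete_E]), hxl⟩
      · push_neg at hxl
        obtain ⟨w, hw⟩ : ∃ w, A.f A.last w ≠ 0 := by
          by_contra hc; push_neg at hc
          exact A.nz _ hlmem (LinearMap.ext fun v => by simp [hc v])
        obtain ⟨ε, hε, hεs⟩ := pert (A.E.erase A.last) A.f x w (fun i hi => by
          intro h0
          apply hC'.ne_zero (by rwa [delete_E])
          rw [← hx i (by rwa [delete_E]), delete_f, h0, sgn_zero])
        refine ⟨x + ε • w, fun i hi => by rw [hεs i hi]; exact hx i (by rwa [delete_E]), ?_⟩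
        rw [map_add, map_smul, hxl, zero_add, smul_eq_mul]
        exact mul_ne_zero (ne_of_gt hε) hw
    -- candidate chamber with sign of x₀ at last
    set C₁ : ℕ → SignType := fun i => if i ∈ A.E then
      (if i = A.last then sgn (A.f A.last x₀) else C' i) else 0 with hC₁
    have hC₁r : restrictSigns (A.E.erase A.last) C₁ = C' := by
      funext i
      rw [restrictSigns]
      by_cases hi : i ∈ A.E.erase A.last
      · rw [if_pos hi, hC₁]
        simp only [if_pos (Finset.mem_of_mem_erase hi), if_neg (Finset.ne_of_mem_erase hi)]
      · rw [if_neg hi, eq_comm]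
        exact hC'.eq_zero (by rwa [delete_E])
    have hC₁ch : A.IsChamber C₁ := by
      refine ⟨fun i hi => ?_, fun i hi => by rw [hC₁]; simp [hi], x₀, fun i hi => ?_⟩
      · rw [hC₁]; simp only [if_pos hi]
        rcases eq_or_ne i A.last with rfl | hil
        · rw [if_pos rfl]; exact fun h => hx₀l (sgn_eq_zero_iff.mp h)
        · rw [if_neg hil]; exact hC'.ne_zero (by rw [delete_E]; exact Finset.mem_erase.mpr ⟨hil, hi⟩)
      · rw [hC₁]; simp only [if_pos hi]
        rcases eq_or_ne i A.last with rfl | hil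
        · rw [if_pos rfl]
        · rw [if_neg hil]; exact hx₀e i (Finset.mem_erase.mpr ⟨hil, hi⟩)
    by_cases hup : A.upperCond B C₁
    · -- replace the last sign by B's sign
      obtain ⟨z, hz0, hz⟩ := hup.2
      obtain ⟨w, hw⟩ := exists_sgn (A.f A.last) (A.nz _ hlmem) (B A.last) hBl
      obtain ⟨ε, hε, hεs⟩ := pert (A.E.erase A.last) A.f z w (fun i hi => fun h0 =>
        (hC₁ch.ne_zero (Finset.mem_of_mem_erase hi)) (by rw [← hz i hi, h0, sgn_zero]))
      set y := z + ε • w with hy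
      have hyl : sgn (A.f A.last y) = B A.last := by
        rw [hy, map_add, map_smul, hz0, zero_add, smul_eq_mul, sgn_mul,
          sgn_of_pos hε, one_mul, hw]
      have hye : ∀ i ∈ A.E.erase A.last, sgn (A.f i y) = C' i := by
        intro i hi
        rw [hy, hεs i hi, hz i hi, hC₁]
        simp only [if_pos (Finset.mem_of_mem_erase hi), if_neg (Finset.ne_of_mem_erase hi)]
      set C₂ : ℕ → SignType := fun i => if i ∈ A.E then
        (if i = A.last then B A.last else C' i) else 0 with hC₂
      have hC₂r : restrictSigns (A.E.erase A.last) C₂ = C' := by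
        funext i
        rw [restrictSigns]
        by_cases hi : i ∈ A.E.erase A.last
        · rw [if_pos hi, hC₂]
          simp only [if_pos (Finset.mem_of_mem_erase hi), if_neg (Finset.ne_of_mem_erase hi)]
        · rw [if_neg hi, eq_comm]
          exact hC'.eq_zero (by rwa [delete_E])
      have hC₂ch : A.IsChamber C₂ := by
        refine ⟨fun i hi => ?_, fun i hi => by rw [hC₂]; simp [hi], y, fun i hi => ?_⟩
        · rw [hC₂]; simp only [if_pos hi]
          rcases eq_or_ne i A.last with rfl | hil
          · rw [if_pos rfl]; exact hBl
          · rw [if_neg hil]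
            exact hC'.ne_zero (by rw [delete_E]; exact Finset.mem_erase.mpr ⟨hil, hi⟩)
        · rw [hC₂]; simp only [if_pos hi]
          rcases eq_or_ne i A.last with rfl | hil
          · rw [if_pos rfl]; exact hyl
          · rw [if_neg hil]; exact hye i (Finset.mem_erase.mpr ⟨hil, hi⟩)
      refine ⟨C₂, ⟨hC₂ch, fun hupC₂ => ?_⟩, hC₂r⟩
      apply hupC₂.1
      rw [hC₂]; simp only [if_pos hlmem, eq_self_iff_true, if_true]
    · exact ⟨C₁, ⟨hC₁ch, hup⟩, hC₁r⟩

end NArr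

namespace NArr
variable {A : NArr V}

/-- In the nondegenerate case, every non-last hyperplane has a sign determined by
its flat representative on the last hyperplane. -/
lemma sign_det
    (hne : A.E.Nonempty)
    (hndeg : ∀ i ∈ A.E.erase A.last, (A.f i).domRestrict (LinearMap.ker (A.f A.last)) ≠ 0)
    {i : ℕ} (hi : i ∈ A.E.erase A.last) :
    ∃ m ∈ A.resE, ∃ c : ℝ, c ≠ 0 ∧
      ∀ x : V, A.f A.last x = 0 → A.f i x = c * A.f m x := by
  obtain ⟨m, hmres, hmle, hmflat⟩ := flatrep hndeg hi
  obtain ⟨c, μ, hc0, hrel, hres⟩ := pair_rel hne (hndeg i hi)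
    (hndeg m (resE_subset hmres)) hmflat.symm
  refine ⟨m, hmres, c, hc0, fun x hx => ?_⟩
  have := congrArg (fun φ => φ (⟨x, LinearMap.mem_ker.mpr hx⟩ :
    LinearMap.ker (A.f A.last))) hres
  simpa using this

/-- L2: upper chambers biject with chambers of the restriction. -/
lemma bij_restrict (hne : A.E.Nonempty) {B : ℕ → SignType} (hBl : B A.last ≠ 0)
    (hndeg : ∀ i ∈ A.E.erase A.last, (A.f i).domRestrict (LinearMap.ker (A.f A.last)) ≠ 0) :
    Set.BijOn (restrictSigns A.resE)
      {C | A.IsChamber C ∧ A.upperCond B C} {D | A.restrict.IsChamber D} := by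
  classical
  have hlmem := last_mem hne
  constructor
  · rintro C ⟨hC, hCu⟩
    exact upper_chamber_restrict hC hCu
  constructor
  · rintro C ⟨hC, hCu⟩ D ⟨hD, hDu⟩ heq
    have heqres : ∀ i ∈ A.resE, C i = D i := by
      intro i hi
      have := congrFun heq i
      rwa [restrictSigns, restrictSigns, if_pos hi, if_pos hi] at this
    obtain ⟨z, hz0, hz⟩ := hCu.2
    obtain ⟨y, hy0, hy⟩ := hDu.2
    funext i
    by_cases hiE : i ∈ A.E
    · rcases eq_or_ne i A.last with rfl | hil
      · rw [signtype_eq_neg (hC.ne_zero hlmem) hBl hCu.1,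
          signtype_eq_neg (hD.ne_zero hlmem) hBl hDu.1]
      · have hier : i ∈ A.E.erase A.last := Finset.mem_erase.mpr ⟨hil, hiE⟩
        obtain ⟨m, hmres, c, hc0, hcd⟩ := sign_det hne hndeg hier
        have hmer := resE_subset hmres
        rw [← hz i hier, ← hy i hier, hcd z hz0, hcd y hy0, sgn_mul, sgn_mul,
          hz m hmer, hy m hmer, heqres m hmres]
    · rw [hC.eq_zero hiE, hD.eq_zero hiE]
  · rintro D hD
    obtain ⟨⟨x, hxker⟩, hx⟩ := hD.witness
    have hxker' : A.f A.last x = 0 := LinearMap.mem_ker.mp hxker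
    have hxns : ∀ i ∈ A.E.erase A.last, A.f i x ≠ 0 := by
      intro i hi
      obtain ⟨m, hmres, c, hc0, hcd⟩ := sign_det hne hndeg hi
      rw [hcd x hxker']
      apply mul_ne_zero hc0
      intro h0
      apply hD.ne_zero (by rwa [restrict_E])
      rw [← hx m (by rwa [restrict_E]), restrict_f]
      show sgn (A.f m x) = 0
      rw [h0, sgn_zero]
    obtain ⟨w, hw⟩ := exists_sgn (A.f A.last) (A.nz _ hlmem) (-(B A.last))
      (signtype_neg_ne_zero hBl)
    obtain ⟨ε, hε, hεs⟩ := pert (A.E.erase A.last) A.f x w hxns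
    set C : ℕ → SignType := fun i => if i ∈ A.E then
      (if i = A.last then -(B A.last) else sgn (A.f i x)) else 0 with hCdef
    have hCch : A.IsChamber C := by
      refine ⟨fun i hi => ?_, fun i hi => by rw [hCdef]; simp [hi], x + ε • w,
        fun i hi => ?_⟩
      · rw [hCdef]; simp only [if_pos hi]
        rcases eq_or_ne i A.last with rfl | hil
        · rw [if_pos rfl]; exact signtype_neg_ne_zero hBl
        · rw [if_neg hil]
          exact fun h => hxns i (Finset.mem_erase.mpr ⟨hil, hi⟩) (sgn_eq_zero_iff.mp h)
      · rw [hCdef]; simp only [if_pos hi]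
        rcases eq_or_ne i A.last with rfl | hil
        · rw [if_pos rfl, map_add, map_smul, hxker', zero_add, smul_eq_mul, sgn_mul,
            sgn_of_pos hε, one_mul, hw]
        · rw [if_neg hil]; exact hεs i (Finset.mem_erase.mpr ⟨hil, hi⟩)
    have hCu : A.upperCond B C := by
      refine ⟨?_, x, hxker', fun i hi => ?_⟩
      · rw [hCdef]; simp only [if_pos hlmem, eq_self_iff_true, if_true]
        exact signtype_neg_ne hBl
      · rw [hCdef]
        simp only [if_pos (Finset.mem_of_mem_erase hi), if_neg (Finset.ne_of_mem_erase hi)]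
    refine ⟨C, ⟨hCch, hCu⟩, ?_⟩
    funext i
    rw [restrictSigns]
    by_cases hi : i ∈ A.resE
    · rw [if_pos hi, hCdef]
      have hier := resE_subset hi
      simp only [if_pos (Finset.mem_of_mem_erase hier), if_neg (Finset.ne_of_mem_erase hier)]
      rw [← hx i (by rwa [restrict_E]), restrict_f]
      rfl
    · rw [if_neg hi, eq_comm]
      exact hD.eq_zero (by rwa [restrict_E])

end NArr

namespace NArr
variable {A : NArr V}

lemma upper_empty_of_deg {j : ℕ} (hj : j ∈ A.E.erase A.last)
    (hdeg : (A.f j).domRestrict (LinearMap.ker (A.f A.last)) = 0)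
    {B C : ℕ → SignType} (hC : A.IsChamber C) (hu : A.upperCond B C) : False := by
  obtain ⟨x, hx0, hx⟩ := hu.2
  apply hC.ne_zero (Finset.mem_of_mem_erase hj)
  rw [← hx j hj]
  have := congrArg (fun φ => φ (⟨x, LinearMap.mem_ker.mpr hx0⟩ :
    LinearMap.ker (A.f A.last))) hdeg
  simp only [LinearMap.domRestrict_apply, LinearMap.zero_apply] at this
  rw [this, sgn_zero]

lemma nbc_empty_arr (hE : A.E = ∅) : A.nbc = {∅} := by
  ext S
  constructor
  · rintro ⟨hI, -⟩
    have : S ⊆ (∅ : Finset ℕ) := hE ▸ hI.1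
    simpa using Finset.subset_empty.mp this
  · rintro rfl
    refine ⟨indep_empty, ?_⟩
    rintro T ⟨T₀, hT₀, hne₀, rfl⟩ -
    obtain ⟨i, hi⟩ := hT₀.nonempty
    have := hT₀.1 hi
    rw [hE] at this
    exact absurd this (Finset.notMem_empty i)

end NArr

/-- Main induction: for any Jewell–Orlik map, chambers are counted by nbc sets. -/
lemma jo_count {V : Type} [AddCommGroup V] [Module ℝ V] {A : NArr V} {B : ℕ → SignType}
    {η : (ℕ → SignType) → Finset ℕ} (h : IsJO V A B η) :
    (∀ i ∈ A.E, B i ≠ 0) → ∀ k : ℕ,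
      Set.ncard {C | A.IsChamber C ∧ (η C).card = k} =
        Set.ncard {S | S ∈ A.nbc ∧ S.card = k} := by
  induction h with
  | base A B η hE hη =>
    intro _ k
    have hnbc := NArr.nbc_empty_arr (A := A) hE
    cases k with
    | zero =>
      have h1 : {C | A.IsChamber C ∧ (η C).card = 0} = {fun _ => (0 : SignType)} := by
        ext C
        simp only [Set.mem_setOf_eq, Set.mem_singleton_iff]
        constructor
        · rintro ⟨hc, -⟩; exact NArr.chamber_zero_of_empty hE hc
        · rintro rfl; exact ⟨NArr.isChamber_zero_of_empty hE, by rw [hη]; rfl⟩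
      have h2 : {S | S ∈ A.nbc ∧ S.card = 0} = {(∅ : Finset ℕ)} := by
        ext S
        simp only [Set.mem_setOf_eq, Set.mem_singleton_iff, hnbc]
        constructor
        · rintro ⟨h, -⟩; exact h
        · rintro rfl; exact ⟨rfl, Finset.card_empty⟩
      rw [h1, h2, Set.ncard_singleton, Set.ncard_singleton]
    | succ k =>
      have h1 : {C | A.IsChamber C ∧ (η C).card = k + 1} = ∅ := by
        ext C; simp [hη]
      have h2 : {S | S ∈ A.nbc ∧ S.card = k + 1} = ∅ := by
        ext S
        simp only [Set.mem_setOf_eq, Set.mem_empty_iff_false, iff_false, not_and, hnbc]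
        rintro rfl
        simp
      rw [h1, h2]
      simp
  | step A B η η' η'' hEne hJO' hJO'' hnotup hup ih' ih'' =>
    intro hB k
    classical
    have hBl : B A.last ≠ 0 := hB _ (NArr.last_mem hEne)
    have hB' : ∀ i ∈ A.delete.E, restrictSigns (A.E.erase A.last) B i ≠ 0 := by
      intro i hi
      rw [NArr.delete_E] at hi
      rw [restrictSigns, if_pos hi]
      exact hB i (Finset.mem_of_mem_erase hi)
    have hB'' : ∀ i ∈ A.restrict.E, restrictSigns A.resE B i ≠ 0 := by
      intro i hi
      rw [NArr.restrict_E] at hi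
      rw [restrictSigns, if_pos hi]
      exact hB i (Finset.mem_of_mem_erase (NArr.resE_subset hi))
    have hcount' := ih' hB'
    have hcount'' := ih'' hB''
    set SN := {C | A.IsChamber C ∧ ¬ A.upperCond B C ∧ (η C).card = k} with hSN
    set SU := {C | A.IsChamber C ∧ A.upperCond B C ∧ (η C).card = k} with hSU
    have hsplit : {C | A.IsChamber C ∧ (η C).card = k} = SN ∪ SU := by
      ext C
      simp only [hSN, hSU, Set.mem_setOf_eq, Set.mem_union]
      by_cases hu : A.upperCond B C <;> tauto
    have hSNfin : SN.Finite :=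
      Set.Finite.subset (NArr.chambers_finite A) (fun C hC => hC.1)
    have hSUfin : SU.Finite :=
      Set.Finite.subset (NArr.chambers_finite A) (fun C hC => hC.1)
    have hdisj : Disjoint SN SU := by
      rw [Set.disjoint_left]
      rintro C ⟨-, hnu, -⟩ ⟨-, hu, -⟩
      exact hnu hu
    rw [hsplit, Set.ncard_union_eq hdisj hSNfin hSUfin]
    -- the non-upper part
    have hbij1 := NArr.bij_delete hEne hBl
    have hbijN : Set.BijOn (restrictSigns (A.E.erase A.last)) SN
        {C' | A.delete.IsChamber C' ∧ (η' C').card = k} := by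
      rw [hSN]
      refine ⟨?_, hbij1.2.1.mono (fun C hC => by
        simp only [Set.mem_setOf_eq] at hC ⊢; exact ⟨hC.1, hC.2.1⟩), ?_⟩
      · rintro C ⟨hC, hnu, hk⟩
        exact ⟨hC.delete, by rw [← hnotup C hC hnu]; exact hk⟩
      · rintro D ⟨hD, hDk⟩
        obtain ⟨C, ⟨hCch, hCnu⟩, rfl⟩ := hbij1.2.2 hD
        exact ⟨C, ⟨hCch, hCnu, by rw [hnotup C hCch hCnu]; exact hDk⟩, rfl⟩
    have hN : SN.ncard = Set.ncard {C' | A.delete.IsChamber C' ∧ (η' C').card = k} := by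
      rw [← hbijN.image_eq, Set.ncard_image_of_injOn hbijN.injOn]
    -- the nbc split
    set TN := {S | S ∈ A.nbc ∧ (A.last ∉ S ∧ S.card = k)} with hTN
    set TU := {S | S ∈ A.nbc ∧ (A.last ∈ S ∧ S.card = k)} with hTU
    have hTsplit : {S | S ∈ A.nbc ∧ S.card = k} = TN ∪ TU := by
      ext S
      simp only [hTN, hTU, Set.mem_setOf_eq, Set.mem_union]
      by_cases hl : A.last ∈ S <;> tauto
    have hTdisj : Disjoint TN TU := by
      rw [Set.disjoint_left]
      rintro S ⟨-, hnl, -⟩ ⟨-, hl, -⟩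
      exact hnl hl
    rw [hTsplit, Set.ncard_union_eq hTdisj (NArr.nbc_subsets_finite A _)
      (NArr.nbc_subsets_finite A _)]
    have hTNeq : TN = {S | S ∈ A.delete.nbc ∧ S.card = k} := by
      ext S
      simp only [hTN, Set.mem_setOf_eq]
      constructor
      · rintro ⟨hS, hl, hk⟩
        exact ⟨(NArr.nbc_nolast hl).mp hS, hk⟩
      · rintro ⟨hS, hk⟩
        have hl : A.last ∉ S := fun h => by
          have := hS.1.1 h
          rw [NArr.delete_E] at this
          exact Finset.ne_of_mem_erase this rfl
        exact ⟨(NArr.nbc_nolast hl).mpr hS, hl, hk⟩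
    by_cases hdeg : ∃ j ∈ A.E.erase A.last,
        (A.f j).domRestrict (LinearMap.ker (A.f A.last)) = 0
    · obtain ⟨j, hj, hjdeg⟩ := hdeg
      have hSUe : SU = ∅ := by
        rw [hSU]
        apply Set.eq_empty_iff_forall_notMem.mpr
        rintro C ⟨hC, hu, hk⟩
        exact NArr.upper_empty_of_deg hj hjdeg hC hu
      have hTUe : TU = ∅ := by
        rw [hTU]
        apply Set.eq_empty_iff_forall_notMem.mpr
        rintro S ⟨hS, hl, hk⟩
        exact NArr.deg_no_last hj hjdeg hS hl
      rw [hSUe, hTUe, hTNeq, hN, hcount' k]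
      simp
    · push_neg at hdeg
      -- cardinality of η on upper chambers
      have hcardU : ∀ C, A.IsChamber C → A.upperCond B C →
          (η C).card = (η'' (restrictSigns A.resE C)).card + 1 := by
        intro C hC hu
        rw [hup C hC hu]
        have hsub := hJO''.eta_subset _ (NArr.upper_chamber_restrict hC hu)
        rw [NArr.restrict_E] at hsub
        have : A.last ∉ η'' (restrictSigns A.resE C) := fun h =>
          Finset.ne_of_mem_erase (NArr.resE_subset (hsub h)) rfl
        rw [Finset.card_insert_of_notMem this]
      cases k with
      | zero =>
        have hSUe : SU = ∅ := by
          rw [hSU]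
          apply Set.eq_empty_iff_forall_notMem.mpr
          rintro C ⟨hC, hu, hk⟩
          rw [hcardU C hC hu] at hk
          omega
        have hTUe : TU = ∅ := by
          rw [hTU]
          apply Set.eq_empty_iff_forall_notMem.mpr
          rintro S ⟨hS, hl, hk⟩
          exact Finset.card_ne_zero_of_mem hl hk
        rw [hSUe, hTUe, hTNeq, hN, hcount' 0]
        simp
      | succ k' =>
        have hbij2 := NArr.bij_restrict hEne hBl hdeg
        have hbijU : Set.BijOn (restrictSigns A.resE) SU
            {D | A.restrict.IsChamber D ∧ (η'' D).card = k'} := by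
          rw [hSU]
          refine ⟨?_, hbij2.2.1.mono (fun C hC => by
            simp only [Set.mem_setOf_eq] at hC ⊢; exact ⟨hC.1, hC.2.1⟩), ?_⟩
          · rintro C ⟨hC, hu, hk⟩
            refine ⟨NArr.upper_chamber_restrict hC hu, ?_⟩
            rw [hcardU C hC hu] at hk
            omega
          · rintro D ⟨hD, hDk⟩
            obtain ⟨C, ⟨hCch, hCu⟩, rfl⟩ := hbij2.2.2 hD
            refine ⟨C, ⟨hCch, hCu, ?_⟩, rfl⟩
            rw [hcardU C hCch hCu, hDk]
        have hU : SU.ncard =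
            Set.ncard {D | A.restrict.IsChamber D ∧ (η'' D).card = k'} := by
          rw [← hbijU.image_eq, Set.ncard_image_of_injOn hbijU.injOn]
        have hbijT : Set.BijOn (fun S => S.erase A.last) TU
            {S' | S' ∈ A.restrict.nbc ∧ S'.card = k'} := by
          rw [hTU]
          refine ⟨?_, ?_, ?_⟩
          · rintro S ⟨hS, hl, hk⟩
            refine ⟨NArr.nbc_erase_last hdeg hS hl, ?_⟩
            rw [Finset.card_erase_of_mem hl, hk]
            omega
          · rintro S₁ ⟨-, hl₁, -⟩ S₂ ⟨-, hl₂, -⟩ heq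
            simp only at heq
            rw [← Finset.insert_erase hl₁, ← Finset.insert_erase hl₂, heq]
          · rintro S' ⟨hS', hk'⟩
            have hlS' : A.last ∉ S' := by
              intro h
              have := hS'.1.1 h
              rw [NArr.restrict_E] at this
              exact Finset.ne_of_mem_erase (NArr.resE_subset this) rfl
            refine ⟨insert A.last S', ⟨NArr.nbc_insert_last hEne hdeg hS',
              Finset.mem_insert_self _ _, ?_⟩, ?_⟩
            · rw [Finset.card_insert_of_notMem hlS', hk']
            · simp only
              rw [Finset.erase_insert hlS']
        have hT : TU.ncard = Set.ncard {S' | S' ∈ A.restrict.nbc ∧ S'.card = k'} := by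
          rw [← hbijT.image_eq, Set.ncard_image_of_injOn hbijT.injOn]
        rw [hN, hcount' (k' + 1), hU, hcount'' k', hTNeq, hT]

/-- Minimality count: if the ordering of `A` satisfies the cut property with respect to
`B`, then for every `k` the number of chambers `C` with `|η(C)| = k` equals the number
of no-broken-circuit sets of `A` of cardinality `k` (which is the `k`-th Betti number
of the complement of the complexified arrangement); these numbers count the critical
cells in dimension `k` of the acyclic matchings of the Salvetti complex. -/
theorem counting_critical_cells (A : NArr V) (B : ℕ → SignType)
    (hB : A.IsChamber B) (hcut : A.CutProp B)
    (η : (ℕ → SignType) → Finset ℕ) (hη : IsJO V A B η) (k : ℕ) :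
    Set.ncard {C | A.IsChamber C ∧ (η C).card = k} =
      Set.ncard {S | S ∈ A.nbc ∧ S.card = k} := by
  exact jo_count hη hB.1 k
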